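/- A binary phylogenetic network N is orchard if and only if V_OR(N) = 0, where V_OR(N) is the minimum over all non-temporal labellings of N of the number of reticulations with no incoming horizontal arc. -/
import Mathlib


namespace PhyloNet

/-- A binary phylogenetic network, encoded on vertex set `verts ⊆ ℕ`. -/
structure Network where
  verts : Finset ℕ
  arc : ℕ → ℕ → Bool
  root : ℕ
  root_mem : root ∈ verts
  arc_mem : ∀ u v : ℕ, arc u v = true → u ∈ verts ∧ v ∈ verts
  acyclic : ∀ v : ℕ, ¬ Relation.TransGen (fun a b : ℕ => arc a b = true) v v
  root_indeg : (verts.filter fun u => arc u root = true).card = 0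
  root_outdeg : (verts.filter fun w => arc root w = true).card = 1
  nonroot_deg : ∀ v ∈ verts, v ≠ root →
    ((verts.filter fun u => arc u v = true).card = 1 ∧
      (verts.filter fun w => arc v w = true).card = 2) ∨
    ((verts.filter fun u => arc u v = true).card = 2 ∧
      (verts.filter fun w => arc v w = true).card = 1) ∨
    ((verts.filter fun u => arc u v = true).card = 1 ∧
      (verts.filter fun w => arc v w = true).card = 0)

def inDeg (N : Network) (v : ℕ) : ℕ := (N.verts.filter fun u => N.arc u v = true).card

def outDeg (N : Network) (v : ℕ) : ℕ := (N.verts.filter fun w => N.arc v w = true).card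

def IsLeaf (N : Network) (v : ℕ) : Prop := v ∈ N.verts ∧ inDeg N v = 1 ∧ outDeg N v = 0

def IsRet (N : Network) (v : ℕ) : Prop := v ∈ N.verts ∧ inDeg N v = 2

def IsTreeVert (N : Network) (v : ℕ) : Prop := v ∈ N.verts ∧ inDeg N v = 1 ∧ outDeg N v = 2

def IsInternal (N : Network) (v : ℕ) : Prop := v ∈ N.verts ∧ v ≠ N.root ∧ ¬ IsLeaf N v

def IsTree (N : Network) : Prop := ∀ v : ℕ, ¬ IsRet N v

noncomputable def retCount (N : Network) : ℕ := {v : ℕ | IsRet N v}.ncard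

/-- Tree-child: every non-leaf vertex has a child that is a tree vertex or a leaf. -/
def IsTreeChild (N : Network) : Prop :=
  ∀ v ∈ N.verts, ¬ IsLeaf N v → ∃ w : ℕ, N.arc v w = true ∧ (IsTreeVert N w ∨ IsLeaf N w)

/-- An omnian: an internal vertex all of whose children are reticulations. -/
def IsOmnian (N : Network) (v : ℕ) : Prop :=
  IsInternal N v ∧ ∀ w : ℕ, N.arc v w = true → IsRet N w

noncomputable def omnianCount (N : Network) : ℕ := {v : ℕ | IsOmnian N v}.ncard

/-- `N'` is obtained from `N` by adding a leaf to the arc `uv`: the arc is subdivided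
by a fresh vertex `w`, and a fresh leaf `x` is attached to `w`. -/
def IsLeafAdditionOn (N N' : Network) (u v : ℕ) : Prop :=
  N.arc u v = true ∧ ∃ w x : ℕ, w ∉ N.verts ∧ x ∉ N.verts ∧ w ≠ x ∧
    N'.verts = insert w (insert x N.verts) ∧ N'.root = N.root ∧
    ∀ a b : ℕ, (N'.arc a b = true ↔
      ((N.arc a b = true ∧ ¬ (a = u ∧ b = v)) ∨ (a = u ∧ b = w) ∨
        (a = w ∧ b = v) ∨ (a = w ∧ b = x)))

def IsLeafAddition (N N' : Network) : Prop := ∃ u v : ℕ, IsLeafAdditionOn N N' u v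

/-- `N'` is obtained from `N` by adding a leaf to a reticulation arc. -/
def IsRetArcLeafAddition (N N' : Network) : Prop :=
  ∃ u v : ℕ, IsRet N v ∧ IsLeafAdditionOn N N' u v

/-- `P` holds after exactly `k` steps of relation `step` starting from `N`. -/
def ReachableBy (step : Network → Network → Prop) (N : Network) (k : ℕ)
    (P : Network → Prop) : Prop :=
  ∃ M : ℕ → Network, M 0 = N ∧ (∀ i : ℕ, i < k → step (M i) (M (i + 1))) ∧ P (M k)

/-- The minimum number of leaf additions needed to bring `N` into the class `P`. -/
noncomputable def leafAddDist (P : Network → Prop) (N : Network) : ℕ :=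
  sInf {k : ℕ | ReachableBy IsLeafAddition N k P}

noncomputable def LTC (N : Network) : ℕ := leafAddDist IsTreeChild N

/-- Reduction of a cherry (x,y): delete the leaf x and suppress its parent p
(whose own parent is q, gaining the arc q → y). -/
def ReducesCherry (N N' : Network) (x y : ℕ) : Prop :=
  ∃ p q : ℕ, IsLeaf N x ∧ IsLeaf N y ∧ x ≠ y ∧
    N.arc p x = true ∧ N.arc p y = true ∧ N.arc q p = true ∧
    N'.verts = (N.verts.erase x).erase p ∧ N'.root = N.root ∧
    ∀ a b : ℕ, (N'.arc a b = true ↔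
      (N.arc a b = true ∧ a ≠ p ∧ b ≠ p ∧ b ≠ x) ∨ (a = q ∧ b = y))

/-- Reduction of a reticulated cherry (x,y): delete the arc from the parent p_y of y
to the reticulation parent p_x of x, and clean up (suppressing p_x and p_y). -/
def ReducesRetCherry (N N' : Network) (x y : ℕ) : Prop :=
  ∃ px py z q : ℕ, IsLeaf N x ∧ IsLeaf N y ∧ IsRet N px ∧
    N.arc px x = true ∧ N.arc py px = true ∧ N.arc py y = true ∧
    N.arc z px = true ∧ z ≠ py ∧ N.arc q py = true ∧
    N'.verts = (N.verts.erase px).erase py ∧ N'.root = N.root ∧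
    ∀ a b : ℕ, (N'.arc a b = true ↔
      (N.arc a b = true ∧ a ≠ px ∧ a ≠ py ∧ b ≠ px ∧ b ≠ py) ∨
        (a = z ∧ b = x) ∨ (a = q ∧ b = y))

def CherryStep (N N' : Network) : Prop :=
  ∃ x y : ℕ, ReducesCherry N N' x y ∨ ReducesRetCherry N N' x y

/-- A network consisting of the root and a single leaf. -/
def IsSingleLeaf (N : Network) : Prop := ∃ x : ℕ, x ≠ N.root ∧ N.verts = {N.root, x}

/-- Orchard: reducible to a single leaf by cherry and reticulated cherry reductions. -/
def IsOrchard (N : Network) : Prop :=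
  ∃ N' : Network, Relation.ReflTransGen CherryStep N N' ∧ IsSingleLeaf N'

noncomputable def LOR (N : Network) : ℕ := leafAddDist IsOrchard N

/-- Tree-based: there is a spanning tree (a choice of one incoming arc for each
non-root vertex) all of whose leaves are leaves of `N`. -/
def IsTreeBased (N : Network) : Prop :=
  ∃ T : ℕ → ℕ → Bool, (∀ u v : ℕ, T u v = true → N.arc u v = true) ∧
    (∀ v ∈ N.verts, v ≠ N.root → (N.verts.filter fun u => T u v = true).card = 1) ∧
    (∀ v ∈ N.verts, ¬ IsLeaf N v → ∃ w : ℕ, T v w = true)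

noncomputable def LTB (N : Network) : ℕ := leafAddDist IsTreeBased N

/-- A zig-zag trail: a nonempty duplicate-free sequence of arcs in which
consecutive arcs share a tail or share a head. -/
def IsZigZag (N : Network) (s : List (ℕ × ℕ)) : Prop :=
  s ≠ [] ∧ s.Nodup ∧ (∀ a ∈ s, N.arc a.1 a.2 = true) ∧
    List.Chain' (fun a b : ℕ × ℕ => a.1 = b.1 ∨ a.2 = b.2) s

def IsMaximalZigZag (N : Network) (s : List (ℕ × ℕ)) : Prop :=
  IsZigZag N s ∧ ∀ t : List (ℕ × ℕ), IsZigZag N t → s.Sublist t → t.length = s.length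

/-- A W-fence: a maximal zig-zag trail of even length whose two end-arc tails
are both reticulations. -/
def IsWFence (N : Network) (s : List (ℕ × ℕ)) : Prop :=
  IsMaximalZigZag N s ∧ s.length % 2 = 0 ∧ 2 ≤ s.length ∧
    IsRet N (s.headD (0, 0)).1 ∧ IsRet N (s.getLastD (0, 0)).1

/-- An N-fence: a maximal zig-zag trail of odd length exactly one of whose
end-arc tails is a reticulation. -/
def IsNFence (N : Network) (s : List (ℕ × ℕ)) : Prop :=
  IsMaximalZigZag N s ∧ s.length % 2 = 1 ∧
    Xor' (IsRet N (s.headD (0, 0)).1) (IsRet N (s.getLastD (0, 0)).1)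

/-- A zig-zag decomposition: a set of maximal zig-zag trails partitioning the
non-root arcs of the network. -/
def IsZigZagDecomposition (N : Network) (D : Set (List (ℕ × ℕ))) : Prop :=
  (∀ s ∈ D, IsMaximalZigZag N s) ∧
  (∀ s ∈ D, ∀ p ∈ s, p.1 ≠ N.root) ∧
  (∀ a b : ℕ, N.arc a b = true → a ≠ N.root → ∃! s : List (ℕ × ℕ), s ∈ D ∧ (a, b) ∈ s)

/-- A cherry shape: two arcs with a common tail. -/
def IsCherryShape (N : Network) (s : Set (ℕ × ℕ)) : Prop :=
  ∃ p x y : ℕ, x ≠ y ∧ N.arc p x = true ∧ N.arc p y = true ∧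
    s = {(p, x), (p, y)}

/-- A reticulated cherry shape: arcs p_x x, p_y p_x, p_y y where p_x is a reticulation;
its middle arc is p_y p_x. -/
def IsRetCherryShape (N : Network) (s : Set (ℕ × ℕ)) : Prop :=
  ∃ x y px py : ℕ, IsRet N px ∧ N.arc px x = true ∧ N.arc py px = true ∧
    N.arc py y = true ∧ y ≠ px ∧ s = {(px, x), (py, px), (py, y)}

/-- `s` is a reticulated cherry shape with middle arc `(u, r)`. -/
def IsMiddleArcOf (N : Network) (s : Set (ℕ × ℕ)) (u r : ℕ) : Prop :=
  ∃ x y : ℕ, IsRet N r ∧ N.arc r x = true ∧ N.arc u r = true ∧ N.arc u y = true ∧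
    y ≠ r ∧ s = {(r, x), (u, r), (u, y)}

/-- A cherry cover: cherry shapes and reticulated cherry shapes covering every
non-root arc exactly once. -/
def IsCherryCover (N : Network) (P : Set (Set (ℕ × ℕ))) : Prop :=
  (∀ s ∈ P, IsCherryShape N s ∨ IsRetCherryShape N s) ∧
  (∀ a b : ℕ, N.arc a b = true → a ≠ N.root →
    ∃! s : Set (ℕ × ℕ), s ∈ P ∧ (a, b) ∈ s)

/-- The internal vertices of a shape are the tails of its arcs. -/
def shapeInternals (s : Set (ℕ × ℕ)) : Set ℕ := {p : ℕ | ∃ x : ℕ, (p, x) ∈ s}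

/-- The endpoints of a shape: heads of its arcs that are not tails of its arcs. -/
def shapeEndpoints (s : Set (ℕ × ℕ)) : Set ℕ :=
  {x : ℕ | (∃ p : ℕ, (p, x) ∈ s) ∧ ∀ y : ℕ, (x, y) ∉ s}

/-- In the auxiliary graph, shape `B` is directly above shape `C` if an internal
vertex of `C` is an endpoint of `B`. -/
def DirectlyAbove (B C : Set (ℕ × ℕ)) : Prop :=
  ∃ v : ℕ, v ∈ shapeEndpoints B ∧ v ∈ shapeInternals C

/-- The auxiliary graph of the cherry cover `P` contains a directed cycle. -/
def HasCyclicAux (P : Set (Set (ℕ × ℕ))) : Prop :=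
  ∃ s ∈ P, Relation.TransGen
    (fun B C : Set (ℕ × ℕ) => B ∈ P ∧ C ∈ P ∧ DirectlyAbove B C) s s

/-- A non-temporal labelling of `N`. -/
def IsNonTemporal (N : Network) (t : ℕ → ℝ) : Prop :=
  (∀ u v : ℕ, N.arc u v = true → t u ≤ t v) ∧
  (∀ u v : ℕ, N.arc u v = true → t u = t v → IsRet N v) ∧
  (∀ u : ℕ, IsInternal N u → ∃ v : ℕ, N.arc u v = true ∧ t u < t v) ∧
  (∀ r u v : ℕ, IsRet N r → N.arc u r = true → N.arc v r = true → u ≠ v →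
    ¬ (t u = t r ∧ t v = t r))

/-- An inret: a reticulation with no incoming horizontal arc
(i.e. both incoming arcs vertical). -/
def Inret (N : Network) (t : ℕ → ℝ) (r : ℕ) : Prop :=
  IsRet N r ∧ ∀ u : ℕ, N.arc u r = true → t u ≠ t r

noncomputable def inretCount (N : Network) (t : ℕ → ℝ) : ℕ := {r : ℕ | Inret N t r}.ncard

/-- HGT-consistent labelling: a non-temporal labelling in which every reticulation
has exactly one incoming horizontal arc. -/
def IsHGTConsistent (N : Network) (t : ℕ → ℝ) : Prop :=
  IsNonTemporal N t ∧ ∀ r : ℕ, IsRet N r → ∃! u : ℕ, N.arc u r = true ∧ t u = t r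

/-- V_OR: the minimum number of inrets over all non-temporal labellings. -/
noncomputable def VOR (N : Network) : ℕ :=
  sInf {k : ℕ | ∃ t : ℕ → ℝ, IsNonTemporal N t ∧ inretCount N t = k}

/-- The network `N` is the result of the vertex-cover reduction applied to `G`. -/
def IsVCReduction {α : Type} [Fintype α] [DecidableEq α] (G : SimpleGraph α)
    (N : Network) : Prop :=
  ∃ (R W L M : α → ℕ → ℕ) (P : α → ℕ) (S : ℕ → ℕ) (rho : ℕ)
    (e : ℕ → α) (pi tau : α → α → ℕ),
    (∀ v : α, ∃! i : ℕ, 1 ≤ i ∧ i ≤ Fintype.card α ∧ e i = v) ∧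
    (∀ v u : α, G.Adj v u → pi v u ∈ ({1, 2, 3} : Set ℕ)) ∧
    (∀ v u u' : α, G.Adj v u → G.Adj v u' → pi v u = pi v u' → u = u') ∧
    (∀ v u : α, G.Adj v u → tau v u ∈ ({5, 6, 7} : Set ℕ)) ∧
    (∀ v u u' : α, G.Adj v u → G.Adj v u' → tau v u = tau v u' → u = u') ∧
    Function.Injective
      (fun z : (α × Fin 8) ⊕ (α × Fin 7) ⊕ (α × Fin 5) ⊕ (α × Fin 4) ⊕ α ⊕
          (Fin (Fintype.card α - 1)) ⊕ Unit =>
        match z with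
        | Sum.inl (v, i) => R v i.1
        | Sum.inr (Sum.inl (v, i)) => W v (i.1 + 1)
        | Sum.inr (Sum.inr (Sum.inl (v, i))) => L v (i.1 + 1)
        | Sum.inr (Sum.inr (Sum.inr (Sum.inl (v, i)))) => M v (i.1 + 1)
        | Sum.inr (Sum.inr (Sum.inr (Sum.inr (Sum.inl v)))) => P v
        | Sum.inr (Sum.inr (Sum.inr (Sum.inr (Sum.inr (Sum.inl i))))) => S (i.1 + 1)
        | Sum.inr (Sum.inr (Sum.inr (Sum.inr (Sum.inr (Sum.inr _))))) => rho) ∧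
    N.root = rho ∧
    (∀ x : ℕ, x ∈ N.verts ↔
      (∃ v i, i ≤ 7 ∧ x = R v i) ∨ (∃ v i, 1 ≤ i ∧ i ≤ 7 ∧ x = W v i) ∨
      (∃ v i, 1 ≤ i ∧ i ≤ 5 ∧ x = L v i) ∨ (∃ v i, 1 ≤ i ∧ i ≤ 4 ∧ x = M v i) ∨
      (∃ v, x = P v) ∨ (∃ i, 1 ≤ i ∧ i ≤ Fintype.card α - 1 ∧ x = S i) ∨ x = rho) ∧
    (∀ a b : ℕ, N.arc a b = true ↔
      (a = rho ∧ b = S 1) ∨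
      (∃ i, 1 ≤ i ∧ i ≤ Fintype.card α - 2 ∧ a = S i ∧ b = S (i + 1)) ∨
      (∃ i, 1 ≤ i ∧ i ≤ Fintype.card α - 1 ∧ a = S i ∧ b = P (e i)) ∨
      (a = S (Fintype.card α - 1) ∧ b = P (e (Fintype.card α))) ∨
      (∃ v, a = P v ∧ (b = M v 4 ∨ b = W v 7)) ∨
      (∃ v, a = M v 4 ∧ (b = M v 3 ∨ b = R v 0)) ∨
      (∃ v, a = M v 3 ∧ (b = M v 2 ∨ b = W v 6)) ∨
      (∃ v, a = M v 2 ∧ (b = M v 1 ∨ b = W v 5)) ∨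
      (∃ v, a = M v 1 ∧ (b = R v 0 ∨ b = W v 4)) ∨
      (∃ v, a = R v 0 ∧ b = R v 1) ∨
      (∃ v i, 1 ≤ i ∧ i ≤ 6 ∧ a = W v i ∧ (b = R v i ∨ b = R v (i + 1))) ∨
      (∃ v, a = W v 7 ∧ (b = R v 7 ∨ b = L v 5)) ∨
      (∃ v i, 1 ≤ i ∧ i ≤ 4 ∧ a = R v i ∧ b = L v i) ∨
      (∃ u v, G.Adj u v ∧ a = R u (tau u v) ∧ b = W v (pi v u)))



section Basics
variable (N : Network)

lemma not_self_arc (v : ℕ) : ¬ N.arc v v = true :=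
  fun h => N.acyclic v (Relation.TransGen.single h)

lemma arc_ne {u v : ℕ} (h : N.arc u v = true) : u ≠ v := by
  intro he; exact not_self_arc N v (he ▸ h)

lemma arc_mem_left {u v : ℕ} (h : N.arc u v = true) : u ∈ N.verts := (N.arc_mem u v h).1
lemma arc_mem_right {u v : ℕ} (h : N.arc u v = true) : v ∈ N.verts := (N.arc_mem u v h).2

lemma not_arc_root {u : ℕ} (h : N.arc u N.root = true) : False := by
  have hu : u ∈ N.verts := (N.arc_mem _ _ h).1
  have h0 := N.root_indeg
  rw [Finset.card_eq_zero] at h0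
  have : u ∈ N.verts.filter (fun u => N.arc u N.root = true) :=
    Finset.mem_filter.mpr ⟨hu, h⟩
  rw [h0] at this; exact absurd this (Finset.notMem_empty u)

lemma ne_root_of_arc {u v : ℕ} (h : N.arc u v = true) : v ≠ N.root :=
  fun he => not_arc_root N (he ▸ h)

lemma vert_cases {v : ℕ} (hv : v ∈ N.verts) (hr : v ≠ N.root) :
    (inDeg N v = 1 ∧ outDeg N v = 2) ∨ (inDeg N v = 2 ∧ outDeg N v = 1) ∨
    (inDeg N v = 1 ∧ outDeg N v = 0) := N.nonroot_deg v hv hr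

lemma exists_parent {v : ℕ} (hv : v ∈ N.verts) (hvr : v ≠ N.root) :
    ∃ u, N.arc u v = true := by
  have h1 : 1 ≤ inDeg N v := by
    rcases vert_cases N hv hvr with ⟨h, _⟩ | ⟨h, _⟩ | ⟨h, _⟩ <;> omega
  obtain ⟨u, hu⟩ := Finset.card_pos.mp (lt_of_lt_of_le zero_lt_one h1)
  exact ⟨u, (Finset.mem_filter.mp hu).2⟩

lemma parent_unique {v : ℕ} (h1 : inDeg N v = 1) {u u' : ℕ}
    (hu : N.arc u v = true) (hu' : N.arc u' v = true) : u = u' := by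
  exact Finset.card_le_one.mp (le_of_eq h1) u
    (Finset.mem_filter.mpr ⟨arc_mem_left N hu, hu⟩) u'
    (Finset.mem_filter.mpr ⟨arc_mem_left N hu', hu'⟩)

lemma child_unique {v : ℕ} (h1 : outDeg N v = 1) {w w' : ℕ}
    (hw : N.arc v w = true) (hw' : N.arc v w' = true) : w = w' := by
  exact Finset.card_le_one.mp (le_of_eq h1) w
    (Finset.mem_filter.mpr ⟨arc_mem_right N hw, hw⟩) w'
    (Finset.mem_filter.mpr ⟨arc_mem_right N hw', hw'⟩)

lemma no_child_of_outDeg_zero {v : ℕ} (h0 : outDeg N v = 0) {w : ℕ}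
    (hw : N.arc v w = true) : False := by
  rw [outDeg, Finset.card_eq_zero] at h0
  have : w ∈ N.verts.filter (fun w => N.arc v w = true) :=
    Finset.mem_filter.mpr ⟨arc_mem_right N hw, hw⟩
  rw [h0] at this; exact absurd this (Finset.notMem_empty w)

lemma leaf_no_child {x : ℕ} (hx : IsLeaf N x) {w : ℕ} (hw : N.arc x w = true) : False :=
  no_child_of_outDeg_zero N hx.2.2 hw

lemma children_eq_pair {p x y : ℕ} (h2 : outDeg N p = 2) (hx : N.arc p x = true)
    (hy : N.arc p y = true) (hxy : x ≠ y) {w : ℕ} (hw : N.arc p w = true) :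
    w = x ∨ w = y := by
  have hsub : ({x, y} : Finset ℕ) ⊆ N.verts.filter (fun w => N.arc p w = true) := by
    intro a ha
    rcases Finset.mem_insert.mp ha with rfl | ha
    · exact Finset.mem_filter.mpr ⟨arc_mem_right N hx, hx⟩
    · rw [Finset.mem_singleton] at ha; subst ha
      exact Finset.mem_filter.mpr ⟨arc_mem_right N hy, hy⟩
  have hcard : (N.verts.filter (fun w => N.arc p w = true)).card ≤ ({x, y} : Finset ℕ).card := by
    rw [Finset.card_pair hxy]; exact le_of_eq h2
  have heq := Finset.eq_of_subset_of_card_le hsub hcard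
  have : w ∈ ({x, y} : Finset ℕ) := by
    rw [heq]; exact Finset.mem_filter.mpr ⟨arc_mem_right N hw, hw⟩
  simpa using this

lemma parents_eq_pair {v x y : ℕ} (h2 : inDeg N v = 2) (hx : N.arc x v = true)
    (hy : N.arc y v = true) (hxy : x ≠ y) {u : ℕ} (hu : N.arc u v = true) :
    u = x ∨ u = y := by
  have hsub : ({x, y} : Finset ℕ) ⊆ N.verts.filter (fun u => N.arc u v = true) := by
    intro a ha
    rcases Finset.mem_insert.mp ha with rfl | ha
    · exact Finset.mem_filter.mpr ⟨arc_mem_left N hx, hx⟩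
    · rw [Finset.mem_singleton] at ha; subst ha
      exact Finset.mem_filter.mpr ⟨arc_mem_left N hy, hy⟩
  have hcard : (N.verts.filter (fun u => N.arc u v = true)).card ≤ ({x, y} : Finset ℕ).card := by
    rw [Finset.card_pair hxy]; exact le_of_eq h2
  have heq := Finset.eq_of_subset_of_card_le hsub hcard
  have : u ∈ ({x, y} : Finset ℕ) := by
    rw [heq]; exact Finset.mem_filter.mpr ⟨arc_mem_left N hu, hu⟩
  simpa using this

lemma exists_other_parent {v u : ℕ} (h2 : inDeg N v = 2) (hu : N.arc u v = true) :
    ∃ z, N.arc z v = true ∧ z ≠ u := by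
  by_contra h
  push_neg at h
  have hone : N.verts.filter (fun w => N.arc w v = true) ⊆ {u} := by
    intro a ha
    have := (Finset.mem_filter.mp ha).2
    rcases eq_or_ne a u with rfl | hne
    · simp
    · exact absurd (h a this) (by simpa using hne)
  have := Finset.card_le_card hone
  rw [Finset.card_singleton] at this
  rw [inDeg] at h2; omega

lemma exists_other_child {p x : ℕ} (h2 : outDeg N p = 2) (hx : N.arc p x = true) :
    ∃ y, N.arc p y = true ∧ y ≠ x := by
  by_contra h
  push_neg at h
  have hone : N.verts.filter (fun w => N.arc p w = true) ⊆ {x} := by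
    intro a ha
    have := (Finset.mem_filter.mp ha).2
    rcases eq_or_ne a x with rfl | hne
    · simp
    · exact absurd (h a this) (by simpa using hne)
  have := Finset.card_le_card hone
  rw [Finset.card_singleton] at this
  rw [outDeg] at h2; omega

lemma ret_ne_root {v : ℕ} (h : IsRet N v) : v ≠ N.root := by
  rintro rfl
  have := h.2; rw [inDeg] at this
  have h0 := N.root_indeg; omega

lemma ret_indeg_parents {v : ℕ} (h : IsRet N v) : ∃ u z, N.arc u v = true ∧
    N.arc z v = true ∧ u ≠ z := by
  obtain ⟨u, hu⟩ := exists_parent N h.1 (ret_ne_root N h)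
  obtain ⟨z, hz, hzu⟩ := exists_other_parent N h.2 hu
  exact ⟨u, z, hu, hz, fun he => hzu he.symm⟩

lemma ret_outdeg {v : ℕ} (h : IsRet N v) : outDeg N v = 1 := by
  rcases vert_cases N h.1 (ret_ne_root N h) with ⟨h1, _⟩ | ⟨_, h1⟩ | ⟨h1, _⟩
  · exact absurd h.2 (by omega)
  · exact h1
  · exact absurd h.2 (by omega)

lemma ret_not_leaf {v : ℕ} (h : IsRet N v) : ¬ IsLeaf N v := by
  intro hl; have := hl.2.1; have := h.2; omega

lemma leaf_not_ret {v : ℕ} (h : IsLeaf N v) : ¬ IsRet N v := by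
  intro hr; exact ret_not_leaf N hr h

lemma leaf_ne_root {v : ℕ} (h : IsLeaf N v) : v ≠ N.root := by
  intro he
  have h1 := h.2.1
  rw [he, inDeg] at h1
  have := N.root_indeg; omega

lemma tree_degs {v : ℕ} (hv : v ∈ N.verts) (hr : v ≠ N.root) (hl : ¬ IsLeaf N v)
    (hret : ¬ IsRet N v) : inDeg N v = 1 ∧ outDeg N v = 2 := by
  rcases vert_cases N hv hr with h | ⟨h1, h2⟩ | ⟨h1, h2⟩
  · exact h
  · exact absurd ⟨hv, h1⟩ hret
  · exact absurd ⟨hv, h1, h2⟩ hl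

lemma internal_cases {v : ℕ} (h : IsInternal N v) :
    IsRet N v ∨ (inDeg N v = 1 ∧ outDeg N v = 2) := by
  rcases vert_cases N h.1 h.2.1 with hc | ⟨h1, _⟩ | ⟨h1, h2⟩
  · exact Or.inr hc
  · exact Or.inl ⟨h.1, h1⟩
  · exact absurd ⟨h.1, h1, h2⟩ h.2.2

lemma internal_exists_child {v : ℕ} (h : IsInternal N v) : ∃ w, N.arc v w = true := by
  rcases internal_cases N h with hr | ⟨_, h2⟩
  · have h1 : 1 ≤ outDeg N v := le_of_eq (ret_outdeg N hr).symm
    obtain ⟨w, hw⟩ := Finset.card_pos.mp (lt_of_lt_of_le zero_lt_one h1)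
    exact ⟨w, (Finset.mem_filter.mp hw).2⟩
  · have h1 : 1 ≤ outDeg N v := by omega
    obtain ⟨w, hw⟩ := Finset.card_pos.mp (lt_of_lt_of_le zero_lt_one h1)
    exact ⟨w, (Finset.mem_filter.mp hw).2⟩

lemma classify {v : ℕ} (hv : v ∈ N.verts) (hr : v ≠ N.root) :
    IsLeaf N v ∨ IsInternal N v := by
  by_cases h : IsLeaf N v
  · exact Or.inl h
  · exact Or.inr ⟨hv, hr, h⟩

lemma root_child : ∃ c, N.arc N.root c = true ∧ ∀ w, N.arc N.root w = true → w = c := by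
  have h1 := N.root_outdeg
  obtain ⟨c, hc⟩ := Finset.card_pos.mp (by omega :
    0 < (N.verts.filter fun w => N.arc N.root w = true).card)
  refine ⟨c, (Finset.mem_filter.mp hc).2, fun w hw => ?_⟩
  exact Finset.card_le_one.mp (le_of_eq h1) w
    (Finset.mem_filter.mpr ⟨arc_mem_right N hw, hw⟩) c hc

end Basics


section Rank
variable (N : Network)

open scoped Classical in
noncomputable def rank (N : Network) (v : ℕ) : ℕ :=
  (N.verts.filter fun u => Relation.TransGen (fun a b => N.arc a b = true) u v).card

lemma rank_lt {u v : ℕ} (h : N.arc u v = true) : rank N u < rank N v := by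
  classical
  rw [rank, rank]
  apply Finset.card_lt_card
  rw [Finset.ssubset_def]
  constructor
  · intro a ha
    have ha' := Finset.mem_filter.mp ha
    exact Finset.mem_filter.mpr ⟨ha'.1, ha'.2.trans (Relation.TransGen.single h)⟩
  · intro hsub
    have hu : u ∈ N.verts.filter fun a => Relation.TransGen (fun a b => N.arc a b = true) a v :=
      Finset.mem_filter.mpr ⟨arc_mem_left N h, Relation.TransGen.single h⟩
    have := Finset.mem_filter.mp (hsub hu)
    exact N.acyclic u this.2

lemma reachable_aux : ∀ n v, rank N v ≤ n → v ∈ N.verts →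
    Relation.ReflTransGen (fun a b => N.arc a b = true) N.root v := by
  intro n
  induction n with
  | zero =>
    intro v hn hv
    by_cases hr : v = N.root
    · exact hr ▸ Relation.ReflTransGen.refl
    · obtain ⟨u, hu⟩ := exists_parent N hv hr
      have := rank_lt N hu; omega
  | succ n ih =>
    intro v hn hv
    by_cases hr : v = N.root
    · exact hr ▸ Relation.ReflTransGen.refl
    · obtain ⟨u, hu⟩ := exists_parent N hv hr
      have h1 : rank N u ≤ n := by have := rank_lt N hu; omega
      exact (ih u h1 (arc_mem_left N hu)).tail hu

lemma reachable {v : ℕ} (hv : v ∈ N.verts) :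
    Relation.ReflTransGen (fun a b => N.arc a b = true) N.root v :=
  reachable_aux N (rank N v) v le_rfl hv

lemma label_mono {t : ℕ → ℝ} (ht : ∀ u v, N.arc u v = true → t u ≤ t v)
    {a b : ℕ} (h : Relation.ReflTransGen (fun a b => N.arc a b = true) a b) :
    t a ≤ t b := by
  induction h with
  | refl => exact le_rfl
  | tail _ hbc ih => exact ih.trans (ht _ _ hbc)

lemma exists_nontemporal : ∃ t : ℕ → ℝ, IsNonTemporal N t := by
  refine ⟨fun v => (rank N v : ℝ), ?_, ?_, ?_, ?_⟩
  · intro u v h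
    show (rank N u : ℝ) ≤ (rank N v : ℝ)
    exact_mod_cast (rank_lt N h).le
  · intro u v h he
    have he' : (rank N u : ℝ) = (rank N v : ℝ) := he
    exact absurd (Nat.cast_injective he') (rank_lt N h).ne
  · intro u hu
    obtain ⟨w, hw⟩ := internal_exists_child N hu
    refine ⟨w, hw, ?_⟩
    show (rank N u : ℝ) < (rank N w : ℝ)
    exact_mod_cast rank_lt N hw
  · intro r u v _ hu _ _ h
    have he' : (rank N u : ℝ) = (rank N r : ℝ) := h.1
    exact absurd (Nat.cast_injective he') (rank_lt N hu).ne

lemma inret_finite (t : ℕ → ℝ) : {r : ℕ | Inret N t r}.Finite :=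
  Set.Finite.subset N.verts.finite_toSet (fun r hr => hr.1.1)

lemma inretCount_eq_zero_iff (t : ℕ → ℝ) : inretCount N t = 0 ↔ ∀ r, ¬ Inret N t r := by
  rw [inretCount, Set.ncard_eq_zero (inret_finite N t)]
  simp [Set.eq_empty_iff_forall_notMem]

lemma VOR_eq_zero_iff :
    VOR N = 0 ↔ ∃ t : ℕ → ℝ, IsNonTemporal N t ∧ inretCount N t = 0 := by
  constructor
  · intro h
    rcases (Nat.sInf_eq_zero.mp h) with h0 | hemp
    · exact h0
    · obtain ⟨t, ht⟩ := exists_nontemporal N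
      exact absurd hemp (Set.nonempty_iff_ne_empty.mp ⟨inretCount N t, t, ht, rfl⟩)
  · intro ⟨t, ht, h0⟩
    exact Nat.sInf_eq_zero.mpr (Or.inl ⟨t, ht, h0⟩)

end Rank


lemma transGen_lift {r s : ℕ → ℕ → Prop} (h : ∀ a b, r a b → Relation.TransGen s a b) :
    ∀ a b, Relation.TransGen r a b → Relation.TransGen s a b := by
  intro a b hab
  induction hab with
  | single h1 => exact h _ _ h1
  | tail _ h1 ih => exact ih.trans (h _ _ h1)

/-! ### Cherry reduction context -/

structure CCtx where
  N : Network
  x : ℕ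
  y : ℕ
  p : ℕ
  q : ℕ
  arc' : ℕ → ℕ → Bool
  hx : IsLeaf N x
  hy : IsLeaf N y
  hxy : x ≠ y
  hpx : N.arc p x = true
  hpy : N.arc p y = true
  hqp : N.arc q p = true
  hA : ∀ a b : ℕ, arc' a b = true ↔
      (N.arc a b = true ∧ a ≠ p ∧ b ≠ p ∧ b ≠ x) ∨ (a = q ∧ b = y)

namespace CCtx
variable (C : CCtx)

def V' : Finset ℕ := (C.N.verts.erase C.x).erase C.p

lemma mem_V' {a : ℕ} : a ∈ C.V' ↔ a ∈ C.N.verts ∧ a ≠ C.p ∧ a ≠ C.x := by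
  simp only [V', Finset.mem_erase]; tauto

lemma p_mem : C.p ∈ C.N.verts := arc_mem_left _ C.hpx
lemma q_mem : C.q ∈ C.N.verts := arc_mem_left _ C.hqp
lemma x_mem : C.x ∈ C.N.verts := arc_mem_right _ C.hpx
lemma y_mem : C.y ∈ C.N.verts := arc_mem_right _ C.hpy
lemma p_ne_root : C.p ≠ C.N.root := ne_root_of_arc _ C.hqp
lemma x_ne_root : C.x ≠ C.N.root := ne_root_of_arc _ C.hpx
lemma y_ne_root : C.y ≠ C.N.root := ne_root_of_arc _ C.hpy
lemma q_ne_p : C.q ≠ C.p := arc_ne _ C.hqp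
lemma x_ne_p : C.x ≠ C.p := (arc_ne _ C.hpx).symm
lemma y_ne_p : C.y ≠ C.p := (arc_ne _ C.hpy).symm
lemma y_ne_x : C.y ≠ C.x := C.hxy.symm
lemma q_ne_x : C.q ≠ C.x := fun he => leaf_no_child _ C.hx (he ▸ C.hqp)
lemma q_ne_y : C.q ≠ C.y := fun he => leaf_no_child _ C.hy (he ▸ C.hqp)

lemma p_degs : inDeg C.N C.p = 1 ∧ outDeg C.N C.p = 2 := by
  rcases vert_cases C.N C.p_mem C.p_ne_root with h | ⟨h1, h2⟩ | ⟨h1, h2⟩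
  · exact h
  · exact absurd (child_unique C.N h2 C.hpx C.hpy) C.hxy
  · exact False.elim (no_child_of_outDeg_zero C.N h2 C.hpx)

lemma child_p : ∀ w, C.N.arc C.p w = true → w = C.x ∨ w = C.y :=
  fun _ hw => children_eq_pair C.N C.p_degs.2 C.hpx C.hpy C.hxy hw

lemma parent_p : ∀ u, C.N.arc u C.p = true → u = C.q :=
  fun _ hu => parent_unique C.N C.p_degs.1 hu C.hqp

lemma parent_x : ∀ u, C.N.arc u C.x = true → u = C.p :=
  fun _ hu => parent_unique C.N C.hx.2.1 hu C.hpx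

lemma parent_y : ∀ u, C.N.arc u C.y = true → u = C.p :=
  fun _ hu => parent_unique C.N C.hy.2.1 hu C.hpy

lemma no_qy : ¬ C.N.arc C.q C.y = true := fun h => absurd (C.parent_y _ h) C.q_ne_p

lemma p_not_ret : ¬ IsRet C.N C.p := fun h => by have := h.2; have := C.p_degs.1; omega
lemma x_not_ret : ¬ IsRet C.N C.x := leaf_not_ret _ C.hx
lemma y_not_ret : ¬ IsRet C.N C.y := leaf_not_ret _ C.hy

lemma inFilter_eq {v : ℕ} (hv : v ∈ C.V') (hvy : v ≠ C.y) :
    C.V'.filter (fun u => C.arc' u v = true) =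
    C.N.verts.filter (fun u => C.N.arc u v = true) := by
  obtain ⟨hvm, hvp, hvx⟩ := C.mem_V'.mp hv
  ext u
  simp only [Finset.mem_filter, C.mem_V']
  constructor
  · rintro ⟨⟨hum, -, -⟩, harc⟩
    rcases (C.hA u v).mp harc with ⟨h1, -⟩ | ⟨-, h2⟩
    · exact ⟨hum, h1⟩
    · exact absurd h2 hvy
  · rintro ⟨hum, harc⟩
    have hup : u ≠ C.p := by
      rintro rfl
      rcases C.child_p v harc with rfl | rfl
      · exact hvx rfl
      · exact hvy rfl
    have hux : u ≠ C.x := by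
      rintro rfl; exact leaf_no_child _ C.hx harc
    exact ⟨⟨hum, hup, hux⟩, (C.hA u v).mpr (Or.inl ⟨harc, hup, hvp, hvx⟩)⟩

lemma inFilter_y : C.V'.filter (fun u => C.arc' u C.y = true) = {C.q} := by
  ext u
  simp only [Finset.mem_filter, C.mem_V', Finset.mem_singleton]
  constructor
  · rintro ⟨⟨-, hup, -⟩, harc⟩
    rcases (C.hA u C.y).mp harc with ⟨h1, hup2, -, -⟩ | ⟨h2, -⟩
    · exact absurd (C.parent_y u h1) hup2
    · exact h2
  · rintro rfl
    exact ⟨⟨C.q_mem, C.q_ne_p, C.q_ne_x⟩, (C.hA _ _).mpr (Or.inr ⟨rfl, rfl⟩)⟩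

lemma outFilter_eq {v : ℕ} (hv : v ∈ C.V') (hvq : v ≠ C.q) :
    C.V'.filter (fun w => C.arc' v w = true) =
    C.N.verts.filter (fun w => C.N.arc v w = true) := by
  obtain ⟨hvm, hvp, hvx⟩ := C.mem_V'.mp hv
  ext w
  simp only [Finset.mem_filter, C.mem_V']
  constructor
  · rintro ⟨⟨hwm, -, -⟩, harc⟩
    rcases (C.hA v w).mp harc with ⟨h1, -⟩ | ⟨h2, -⟩
    · exact ⟨hwm, h1⟩
    · exact absurd h2 hvq
  · rintro ⟨hwm, harc⟩
    have hwp : w ≠ C.p := by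
      rintro rfl; exact hvq (C.parent_p v harc)
    have hwx : w ≠ C.x := by
      rintro rfl; exact hvp (C.parent_x v harc)
    exact ⟨⟨hwm, hwp, hwx⟩, (C.hA v w).mpr (Or.inl ⟨harc, hvp, hwp, hwx⟩)⟩

lemma outFilter_q : C.V'.filter (fun w => C.arc' C.q w = true) =
    insert C.y ((C.N.verts.filter (fun w => C.N.arc C.q w = true)).erase C.p) := by
  ext w
  simp only [Finset.mem_filter, C.mem_V', Finset.mem_insert, Finset.mem_erase]
  constructor
  · rintro ⟨⟨hwm, hwp, -⟩, harc⟩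
    rcases (C.hA C.q w).mp harc with ⟨h1, -⟩ | ⟨-, h2⟩
    · exact Or.inr ⟨hwp, hwm, h1⟩
    · exact Or.inl h2
  · rintro (rfl | ⟨hwp, hwm, harc⟩)
    · exact ⟨⟨C.y_mem, C.y_ne_p, C.y_ne_x⟩, (C.hA _ _).mpr (Or.inr ⟨rfl, rfl⟩)⟩
    · have hwx : w ≠ C.x := by
        rintro rfl; exact C.q_ne_p (C.parent_x C.q harc)
      exact ⟨⟨hwm, hwp, hwx⟩, (C.hA _ _).mpr (Or.inl ⟨harc, C.q_ne_p, hwp, hwx⟩)⟩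

lemma inDeg' {v : ℕ} (hv : v ∈ C.V') :
    (C.V'.filter (fun u => C.arc' u v = true)).card = inDeg C.N v := by
  by_cases hvy : v = C.y
  · subst hvy
    rw [C.inFilter_y, Finset.card_singleton, inDeg]
    exact C.hy.2.1.symm
  · rw [C.inFilter_eq hv hvy, inDeg]

lemma outDeg' {v : ℕ} (hv : v ∈ C.V') :
    (C.V'.filter (fun w => C.arc' v w = true)).card = outDeg C.N v := by
  by_cases hvq : v = C.q
  · subst hvq
    rw [C.outFilter_q]
    have hyni : C.y ∉ (C.N.verts.filter (fun w => C.N.arc C.q w = true)).erase C.p := by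
      simp only [Finset.mem_erase, Finset.mem_filter]
      rintro ⟨-, -, h⟩; exact C.no_qy h
    have hpmem : C.p ∈ C.N.verts.filter (fun w => C.N.arc C.q w = true) :=
      Finset.mem_filter.mpr ⟨C.p_mem, C.hqp⟩
    rw [Finset.card_insert_of_notMem hyni, Finset.card_erase_of_mem hpmem]
    have : 1 ≤ (C.N.verts.filter (fun w => C.N.arc C.q w = true)).card :=
      Finset.card_pos.mpr ⟨C.p, hpmem⟩
    rw [outDeg]; omega
  · rw [C.outFilter_eq hv hvq, outDeg]

lemma root_mem_V' : C.N.root ∈ C.V' :=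
  C.mem_V'.mpr ⟨C.N.root_mem, fun h => C.p_ne_root h.symm, fun h => C.x_ne_root h.symm⟩

lemma arc'_transGen {a b : ℕ} (h : C.arc' a b = true) :
    Relation.TransGen (fun a b : ℕ => C.N.arc a b = true) a b := by
  rcases (C.hA a b).mp h with ⟨h1, -⟩ | ⟨rfl, rfl⟩
  · exact Relation.TransGen.single h1
  · exact Relation.TransGen.trans (Relation.TransGen.single C.hqp)
      (Relation.TransGen.single C.hpy)

def toNetwork : Network where
  verts := C.V'
  arc := C.arc'
  root := C.N.root
  root_mem := C.root_mem_V'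
  arc_mem := by
    intro a b h
    rcases (C.hA a b).mp h with ⟨h1, hap, hbp, hbx⟩ | ⟨rfl, rfl⟩
    · have hax : a ≠ C.x := by
        rintro rfl; exact leaf_no_child _ C.hx h1
      exact ⟨C.mem_V'.mpr ⟨arc_mem_left _ h1, hap, hax⟩,
        C.mem_V'.mpr ⟨arc_mem_right _ h1, hbp, hbx⟩⟩
    · exact ⟨C.mem_V'.mpr ⟨C.q_mem, C.q_ne_p, C.q_ne_x⟩,
        C.mem_V'.mpr ⟨C.y_mem, C.y_ne_p, C.y_ne_x⟩⟩
  acyclic := by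
    intro v h
    exact C.N.acyclic v (transGen_lift (fun a b hab => C.arc'_transGen hab) v v h)
  root_indeg := by
    rw [C.inDeg' C.root_mem_V']
    exact C.N.root_indeg
  root_outdeg := by
    rw [C.outDeg' C.root_mem_V']
    exact C.N.root_outdeg
  nonroot_deg := by
    intro v hv hvr
    rw [C.inDeg' hv, C.outDeg' hv]
    exact C.N.nonroot_deg v (C.mem_V'.mp hv).1 hvr

end CCtx


namespace CCtx
variable (C : CCtx)

lemma toNetwork_verts : C.toNetwork.verts = C.V' := rfl
lemma toNetwork_root : C.toNetwork.root = C.N.root := rfl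

lemma isRet_iff {v : ℕ} (hv : v ∈ C.V') : IsRet C.toNetwork v ↔ IsRet C.N v := by
  have h := C.inDeg' hv
  constructor
  · rintro ⟨-, hd⟩
    refine ⟨(C.mem_V'.mp hv).1, ?_⟩
    rw [← h]; exact hd
  · rintro ⟨-, hd⟩
    refine ⟨hv, ?_⟩
    show (C.V'.filter (fun u => C.arc' u v = true)).card = 2
    rw [h]; exact hd

lemma isLeaf_iff {v : ℕ} (hv : v ∈ C.V') : IsLeaf C.toNetwork v ↔ IsLeaf C.N v := by
  have h1 := C.inDeg' hv
  have h2 := C.outDeg' hv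
  constructor
  · rintro ⟨-, hd, ho⟩
    refine ⟨(C.mem_V'.mp hv).1, ?_, ?_⟩
    · rw [← h1]; exact hd
    · rw [← h2]; exact ho
  · rintro ⟨-, hd, ho⟩
    refine ⟨hv, ?_, ?_⟩
    · show (C.V'.filter (fun u => C.arc' u v = true)).card = 1
      rw [h1]; exact hd
    · show (C.V'.filter (fun w => C.arc' v w = true)).card = 0
      rw [h2]; exact ho

lemma card_V' : C.V'.card + 2 = C.N.verts.card := by
  have hpe : C.p ∈ C.N.verts.erase C.x :=
    Finset.mem_erase.mpr ⟨fun h => C.x_ne_p h.symm, C.p_mem⟩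
  have h1 : 1 ≤ (C.N.verts.erase C.x).card := Finset.card_pos.mpr ⟨C.p, hpe⟩
  have h2 : 1 ≤ C.N.verts.card := Finset.card_pos.mpr ⟨C.x, C.x_mem⟩
  rw [V', Finset.card_erase_of_mem hpe, Finset.card_erase_of_mem C.x_mem]
  rw [Finset.card_erase_of_mem C.x_mem] at h1
  omega

lemma step : CherryStep C.N C.toNetwork :=
  ⟨C.x, C.y, Or.inl ⟨C.p, C.q, C.hx, C.hy, C.hxy, C.hpx, C.hpy, C.hqp, rfl, rfl, C.hA⟩⟩

lemma label_reduce {t : ℕ → ℝ} (ht : IsNonTemporal C.N t)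
    (hall : ∀ r, IsRet C.N r → ∃ u, C.N.arc u r = true ∧ t u = t r) :
    IsNonTemporal C.toNetwork t ∧
    ∀ r, IsRet C.toNetwork r → ∃ u, C.toNetwork.arc u r = true ∧ t u = t r := by
  obtain ⟨ha1, ha2, ha3, ha4⟩ := ht
  have hqp' : t C.q < t C.p := by
    have a1 : t C.q ≤ t C.p := ha1 _ _ C.hqp
    have : t C.q ≠ t C.p := fun he => C.p_not_ret (ha2 _ _ C.hqp he)
    exact lt_of_le_of_ne a1 this
  have hqy : t C.q < t C.y := lt_of_lt_of_le hqp' (ha1 _ _ C.hpy)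
  have harc : ∀ a b : ℕ, C.toNetwork.arc a b = true →
      (a = C.q ∧ b = C.y) ∨ (C.N.arc a b = true ∧ a ≠ C.p ∧ b ≠ C.p ∧ b ≠ C.x) := by
    intro a b h
    rcases (C.hA a b).mp h with h1 | h2
    · exact Or.inr h1
    · exact Or.inl h2
  refine ⟨⟨?_, ?_, ?_, ?_⟩, ?_⟩
  · intro u v h
    rcases harc u v h with ⟨rfl, rfl⟩ | ⟨h1, -⟩
    · exact hqy.le
    · exact ha1 _ _ h1
  · intro u v h he
    rcases harc u v h with ⟨rfl, rfl⟩ | ⟨h1, -⟩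
    · exact absurd he hqy.ne
    · have hv : v ∈ C.V' := (C.toNetwork.arc_mem u v h).2
      exact (C.isRet_iff hv).mpr (ha2 _ _ h1 he)
  · intro u hu
    have huV : u ∈ C.V' := hu.1
    obtain ⟨hum, hup, hux⟩ := C.mem_V'.mp huV
    have huN : IsInternal C.N u :=
      ⟨hum, hu.2.1, fun hl => hu.2.2 ((C.isLeaf_iff huV).mpr hl)⟩
    obtain ⟨v, hv, hlt⟩ := ha3 u huN
    by_cases hvp : v = C.p
    · subst hvp
      have huq : u = C.q := C.parent_p u hv
      subst huq
      refine ⟨C.y, (C.hA _ _).mpr (Or.inr ⟨rfl, rfl⟩), hqy⟩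
    · have hvx : v ≠ C.x := by
        rintro rfl; exact hup (C.parent_x u hv)
      exact ⟨v, (C.hA _ _).mpr (Or.inl ⟨hv, hup, hvp, hvx⟩), hlt⟩
  · intro r u v hr hu hv huv hboth
    have hrV : r ∈ C.V' := hr.1
    have hrN : IsRet C.N r := (C.isRet_iff hrV).mp hr
    have hmap : ∀ w, C.toNetwork.arc w r = true → C.N.arc w r = true := by
      intro w hw
      rcases harc w r hw with ⟨-, rfl⟩ | ⟨h1, -⟩
      · exact absurd hrN C.y_not_ret
      · exact h1
    exact ha4 r u v hrN (hmap u hu) (hmap v hv) huv hboth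
  · intro r hr
    have hrV : r ∈ C.V' := hr.1
    obtain ⟨hrm, hrp, hrx⟩ := C.mem_V'.mp hrV
    have hrN : IsRet C.N r := (C.isRet_iff hrV).mp hr
    obtain ⟨u, hu, he⟩ := hall r hrN
    have hup : u ≠ C.p := by
      rintro rfl
      rcases C.child_p r hu with rfl | rfl
      · exact hrx rfl
      · exact C.y_not_ret hrN
    exact ⟨u, (C.hA _ _).mpr (Or.inl ⟨hu, hup, hrp, hrx⟩), he⟩

lemma arcN_cases {a b : ℕ} (h : C.N.arc a b = true) :
    (a = C.q ∧ b = C.p) ∨ (a = C.p ∧ b = C.x) ∨ (a = C.p ∧ b = C.y) ∨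
    (C.arc' a b = true ∧ a ≠ C.p ∧ a ≠ C.x ∧ a ≠ C.y ∧ b ≠ C.p ∧ b ≠ C.x ∧ b ≠ C.y) := by
  by_cases hbp : b = C.p
  · subst hbp; exact Or.inl ⟨C.parent_p a h, rfl⟩
  by_cases hbx : b = C.x
  · subst hbx; exact Or.inr (Or.inl ⟨C.parent_x a h, rfl⟩)
  by_cases hby : b = C.y
  · subst hby; exact Or.inr (Or.inr (Or.inl ⟨C.parent_y a h, rfl⟩))
  have hap : a ≠ C.p := by
    rintro rfl
    rcases C.child_p b h with rfl | rfl
    · exact hbx rfl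
    · exact hby rfl
  have hax : a ≠ C.x := by rintro rfl; exact leaf_no_child _ C.hx h
  have hay : a ≠ C.y := by rintro rfl; exact leaf_no_child _ C.hy h
  exact Or.inr (Or.inr (Or.inr ⟨(C.hA a b).mpr (Or.inl ⟨h, hap, hbp, hbx⟩),
    hap, hax, hay, hbp, hbx, hby⟩))

lemma label_pullback {t' : ℕ → ℝ} (ht : IsNonTemporal C.toNetwork t')
    (hall : ∀ r, IsRet C.toNetwork r → ∃ u, C.toNetwork.arc u r = true ∧ t' u = t' r) :
    ∃ t, IsNonTemporal C.N t ∧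
      ∀ r, IsRet C.N r → ∃ u, C.N.arc u r = true ∧ t u = t r := by
  classical
  obtain ⟨ha1, ha2, ha3, ha4⟩ := ht
  refine ⟨fun v => if v = C.x ∨ v = C.y then t' C.q + 2
      else if v = C.p then t' C.q + 1 else t' v, ?_⟩
  set t : ℕ → ℝ := fun v => if v = C.x ∨ v = C.y then t' C.q + 2
      else if v = C.p then t' C.q + 1 else t' v with htdef
  have tx : t C.x = t' C.q + 2 := by simp [htdef]
  have ty : t C.y = t' C.q + 2 := by simp [htdef]
  have tp : t C.p = t' C.q + 1 := by
    have hnp : ¬(C.p = C.x ∨ C.p = C.y) := by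
      push_neg; exact ⟨fun h => C.x_ne_p h.symm, fun h => C.y_ne_p h.symm⟩
    simp [htdef, hnp]
  have tother : ∀ v, v ≠ C.p → v ≠ C.x → v ≠ C.y → t v = t' v := by
    intro v h1 h2 h3
    have hn : ¬(v = C.x ∨ v = C.y) := by push_neg; exact ⟨h2, h3⟩
    simp [htdef, hn, h1]
  have tq : t C.q = t' C.q := tother _ C.q_ne_p C.q_ne_x C.q_ne_y
  -- the ret set of N away from p,x,y matches toNetwork
  have hretN : ∀ r, IsRet C.N r → r ≠ C.p ∧ r ≠ C.x ∧ r ≠ C.y ∧ r ∈ C.V' ∧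
      IsRet C.toNetwork r := by
    intro r hr
    have hrp : r ≠ C.p := fun he => C.p_not_ret (he ▸ hr)
    have hrx : r ≠ C.x := fun he => C.x_not_ret (he ▸ hr)
    have hry : r ≠ C.y := fun he => C.y_not_ret (he ▸ hr)
    have hrV : r ∈ C.V' := C.mem_V'.mpr ⟨hr.1, hrp, hrx⟩
    exact ⟨hrp, hrx, hry, hrV, (C.isRet_iff hrV).mpr hr⟩
  refine ⟨⟨?_, ?_, ?_, ?_⟩, ?_⟩
  · intro u v h
    rcases C.arcN_cases h with ⟨rfl, rfl⟩ | ⟨rfl, rfl⟩ | ⟨rfl, rfl⟩ |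
      ⟨h1, hup, hux, huy, hvp, hvx, hvy⟩
    · rw [tq, tp]; linarith
    · rw [tp, tx]; linarith
    · rw [tp, ty]; linarith
    · rw [tother u hup hux huy, tother v hvp hvx hvy]
      exact ha1 _ _ h1
  · intro u v h he
    rcases C.arcN_cases h with ⟨rfl, rfl⟩ | ⟨rfl, rfl⟩ | ⟨rfl, rfl⟩ |
      ⟨h1, hup, hux, huy, hvp, hvx, hvy⟩
    · rw [tq, tp] at he; linarith
    · rw [tp, tx] at he; linarith
    · rw [tp, ty] at he; linarith
    · rw [tother u hup hux huy, tother v hvp hvx hvy] at he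
      have hret' := ha2 _ _ h1 he
      have hvV : v ∈ C.V' := (C.toNetwork.arc_mem u v h1).2
      have : IsRet C.N v := (C.isRet_iff hvV).mp hret'
      exact this
  · intro u hu
    by_cases hup : u = C.p
    · subst hup
      refine ⟨C.x, C.hpx, ?_⟩
      rw [tp, tx]; linarith
    · have hux : u ≠ C.x := fun he => hu.2.2 (he ▸ C.hx)
      have huy : u ≠ C.y := fun he => hu.2.2 (he ▸ C.hy)
      have huV : u ∈ C.V' := C.mem_V'.mpr ⟨hu.1, hup, hux⟩
      have hu' : IsInternal C.toNetwork u :=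
        ⟨huV, hu.2.1, fun hl => hu.2.2 ((C.isLeaf_iff huV).mp hl)⟩
      obtain ⟨c, hc, hlt⟩ := ha3 u hu'
      rcases (C.hA u c).mp hc with ⟨h1, -, hcp, hcx⟩ | ⟨rfl, rfl⟩
      · have hcy : c ≠ C.y := by
          rintro rfl; exact hup (C.parent_y u h1)
        refine ⟨c, h1, ?_⟩
        rw [tother u hup hux huy, tother c hcp hcx hcy]
        exact hlt
      · refine ⟨C.p, C.hqp, ?_⟩
        rw [tq, tp]; linarith
  · intro r u v hr hu hv huv hboth
    obtain ⟨hrp, hrx, hry, hrV, hr'⟩ := hretN r hr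
    have hmap : ∀ w, C.N.arc w r = true →
        C.toNetwork.arc w r = true ∧ t w = t' w := by
      intro w hw
      rcases C.arcN_cases hw with ⟨rfl, h2⟩ | ⟨rfl, h2⟩ | ⟨rfl, h2⟩ |
        ⟨h1, hwp, hwx, hwy, -⟩
      · exact absurd h2 hrp
      · exact absurd h2 hrx
      · exact absurd h2 hry
      · exact ⟨h1, tother w hwp hwx hwy⟩
    obtain ⟨hu', hut⟩ := hmap u hu
    obtain ⟨hv', hvt⟩ := hmap v hv
    refine ha4 r u v hr' hu' hv' huv ?_
    rw [← hut, ← hvt, ← tother r hrp hrx hry]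
    exact hboth
  · intro r hr
    obtain ⟨hrp, hrx, hry, hrV, hr'⟩ := hretN r hr
    obtain ⟨u, hu, he⟩ := hall r hr'
    rcases (C.hA u r).mp hu with ⟨h1, hup, -, -⟩ | ⟨rfl, rfl⟩
    · have hux : u ≠ C.x := by rintro rfl; exact leaf_no_child _ C.hx h1
      have huy : u ≠ C.y := by rintro rfl; exact leaf_no_child _ C.hy h1
      refine ⟨u, h1, ?_⟩
      rw [tother u hup hux huy, tother r hrp hrx hry]
      exact he
    · exact absurd rfl hry

end CCtx


/-! ### Reticulated cherry reduction context -/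

structure RCtx where
  N : Network
  x : ℕ
  y : ℕ
  px : ℕ
  py : ℕ
  z : ℕ
  q : ℕ
  arc' : ℕ → ℕ → Bool
  hx : IsLeaf N x
  hy : IsLeaf N y
  hret : IsRet N px
  hpxx : N.arc px x = true
  hpypx : N.arc py px = true
  hpyy : N.arc py y = true
  hzpx : N.arc z px = true
  hzpy : z ≠ py
  hqpy : N.arc q py = true
  hA : ∀ a b : ℕ, arc' a b = true ↔
      (N.arc a b = true ∧ a ≠ px ∧ a ≠ py ∧ b ≠ px ∧ b ≠ py) ∨
        (a = z ∧ b = x) ∨ (a = q ∧ b = y)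

namespace RCtx
variable (C : RCtx)

def V' : Finset ℕ := (C.N.verts.erase C.px).erase C.py

lemma mem_V' {a : ℕ} : a ∈ C.V' ↔ a ∈ C.N.verts ∧ a ≠ C.px ∧ a ≠ C.py := by
  simp only [V', Finset.mem_erase]; tauto

lemma px_mem : C.px ∈ C.N.verts := arc_mem_left _ C.hpxx
lemma py_mem : C.py ∈ C.N.verts := arc_mem_left _ C.hpyy
lemma x_mem : C.x ∈ C.N.verts := arc_mem_right _ C.hpxx
lemma y_mem : C.y ∈ C.N.verts := arc_mem_right _ C.hpyy
lemma z_mem : C.z ∈ C.N.verts := arc_mem_left _ C.hzpx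
lemma q_mem : C.q ∈ C.N.verts := arc_mem_left _ C.hqpy

lemma px_ne_root : C.px ≠ C.N.root := ne_root_of_arc _ C.hpypx
lemma py_ne_root : C.py ≠ C.N.root := ne_root_of_arc _ C.hqpy
lemma x_ne_root : C.x ≠ C.N.root := ne_root_of_arc _ C.hpxx
lemma y_ne_root : C.y ≠ C.N.root := ne_root_of_arc _ C.hpyy

lemma py_ne_px : C.py ≠ C.px := arc_ne _ C.hpypx
lemma px_ne_py : C.px ≠ C.py := (arc_ne _ C.hpypx).symm
lemma px_outdeg : outDeg C.N C.px = 1 := ret_outdeg _ C.hret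
lemma child_px : ∀ w, C.N.arc C.px w = true → w = C.x :=
  fun _ hw => child_unique C.N C.px_outdeg hw C.hpxx
lemma y_ne_px : C.y ≠ C.px := fun he => ret_not_leaf _ C.hret (he ▸ C.hy)
lemma x_ne_px : C.x ≠ C.px := fun he => ret_not_leaf _ C.hret (he ▸ C.hx)
lemma parents_px : ∀ u, C.N.arc u C.px = true → u = C.py ∨ u = C.z :=
  fun _ hu => parents_eq_pair C.N C.hret.2 C.hpypx C.hzpx C.hzpy.symm hu

lemma py_degs : inDeg C.N C.py = 1 ∧ outDeg C.N C.py = 2 := by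
  rcases vert_cases C.N C.py_mem C.py_ne_root with h | ⟨h1, h2⟩ | ⟨h1, h2⟩
  · exact h
  · exact absurd (child_unique C.N h2 C.hpypx C.hpyy) C.y_ne_px.symm
  · exact False.elim (no_child_of_outDeg_zero C.N h2 C.hpyy)

lemma child_py : ∀ w, C.N.arc C.py w = true → w = C.px ∨ w = C.y :=
  fun _ hw => children_eq_pair C.N C.py_degs.2 C.hpypx C.hpyy C.y_ne_px.symm hw
lemma parent_py : ∀ u, C.N.arc u C.py = true → u = C.q :=
  fun _ hu => parent_unique C.N C.py_degs.1 hu C.hqpy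
lemma parent_x : ∀ u, C.N.arc u C.x = true → u = C.px :=
  fun _ hu => parent_unique C.N C.hx.2.1 hu C.hpxx
lemma parent_y : ∀ u, C.N.arc u C.y = true → u = C.py :=
  fun _ hu => parent_unique C.N C.hy.2.1 hu C.hpyy

lemma x_ne_y : C.x ≠ C.y := by
  intro he
  exact C.px_ne_py (C.parent_y C.px (he ▸ C.hpxx))
lemma x_ne_py : C.x ≠ C.py := fun he => leaf_no_child _ C.hx (he ▸ C.hpypx)
lemma y_ne_py : C.y ≠ C.py := fun he => leaf_no_child _ C.hy (he ▸ C.hpypx)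
lemma z_ne_px : C.z ≠ C.px := arc_ne _ C.hzpx
lemma z_ne_x : C.z ≠ C.x := fun he => leaf_no_child _ C.hx (he ▸ C.hzpx)
lemma z_ne_y : C.z ≠ C.y := fun he => leaf_no_child _ C.hy (he ▸ C.hzpx)
lemma q_ne_py : C.q ≠ C.py := arc_ne _ C.hqpy
lemma q_ne_px : C.q ≠ C.px := by
  intro he
  exact C.N.acyclic C.px (Relation.TransGen.trans
    (Relation.TransGen.single (he ▸ C.hqpy)) (Relation.TransGen.single C.hpypx))
lemma q_ne_x : C.q ≠ C.x := fun he => leaf_no_child _ C.hx (he ▸ C.hqpy)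
lemma q_ne_y : C.q ≠ C.y := fun he => leaf_no_child _ C.hy (he ▸ C.hqpy)

lemma no_z_x : ¬ C.N.arc C.z C.x = true := fun h => C.z_ne_px (C.parent_x _ h)
lemma no_q_y : ¬ C.N.arc C.q C.y = true := fun h => C.q_ne_py (C.parent_y _ h)

lemma px_not_ret_stuff : True := trivial

lemma py_not_ret : ¬ IsRet C.N C.py := fun h => by
  have := h.2; have := C.py_degs.1; omega
lemma x_not_ret : ¬ IsRet C.N C.x := leaf_not_ret _ C.hx
lemma y_not_ret : ¬ IsRet C.N C.y := leaf_not_ret _ C.hy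

lemma inFilter_other {v : ℕ} (hv : v ∈ C.V') (hvx : v ≠ C.x) (hvy : v ≠ C.y) :
    C.V'.filter (fun u => C.arc' u v = true) =
    C.N.verts.filter (fun u => C.N.arc u v = true) := by
  obtain ⟨hvm, hvpx, hvpy⟩ := C.mem_V'.mp hv
  ext u
  simp only [Finset.mem_filter, C.mem_V']
  constructor
  · rintro ⟨⟨hum, -, -⟩, harc⟩
    rcases (C.hA u v).mp harc with ⟨h1, -⟩ | ⟨-, h2⟩ | ⟨-, h2⟩
    · exact ⟨hum, h1⟩
    · exact absurd h2 hvx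
    · exact absurd h2 hvy
  · rintro ⟨hum, harc⟩
    have hupx : u ≠ C.px := by
      rintro rfl; exact hvx (C.child_px v harc)
    have hupy : u ≠ C.py := by
      rintro rfl
      rcases C.child_py v harc with rfl | rfl
      · exact hvpx rfl
      · exact hvy rfl
    exact ⟨⟨hum, hupx, hupy⟩, (C.hA u v).mpr (Or.inl ⟨harc, hupx, hupy, hvpx, hvpy⟩)⟩

lemma inFilter_x : C.V'.filter (fun u => C.arc' u C.x = true) = {C.z} := by
  ext u
  simp only [Finset.mem_filter, C.mem_V', Finset.mem_singleton]
  constructor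
  · rintro ⟨⟨-, hupx, -⟩, harc⟩
    rcases (C.hA u C.x).mp harc with ⟨h1, hux2, -⟩ | ⟨h2, -⟩ | ⟨-, h2⟩
    · exact absurd (C.parent_x u h1) hux2
    · exact h2
    · exact absurd h2 C.x_ne_y
  · rintro rfl
    exact ⟨⟨C.z_mem, C.z_ne_px, C.hzpy⟩, (C.hA _ _).mpr (Or.inr (Or.inl ⟨rfl, rfl⟩))⟩

lemma inFilter_y : C.V'.filter (fun u => C.arc' u C.y = true) = {C.q} := by
  ext u
  simp only [Finset.mem_filter, C.mem_V', Finset.mem_singleton]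
  constructor
  · rintro ⟨⟨-, -, hupy⟩, harc⟩
    rcases (C.hA u C.y).mp harc with ⟨h1, -, hup2, -⟩ | ⟨-, h2⟩ | ⟨h2, -⟩
    · exact absurd (C.parent_y u h1) hup2
    · exact absurd h2 C.x_ne_y.symm
    · exact h2
  · rintro rfl
    exact ⟨⟨C.q_mem, C.q_ne_px, C.q_ne_py⟩, (C.hA _ _).mpr (Or.inr (Or.inr ⟨rfl, rfl⟩))⟩

lemma inDeg' {v : ℕ} (hv : v ∈ C.V') :
    (C.V'.filter (fun u => C.arc' u v = true)).card = inDeg C.N v := by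
  by_cases hvx : v = C.x
  · subst hvx
    rw [C.inFilter_x, Finset.card_singleton, inDeg]
    exact C.hx.2.1.symm
  by_cases hvy : v = C.y
  · subst hvy
    rw [C.inFilter_y, Finset.card_singleton, inDeg]
    exact C.hy.2.1.symm
  · rw [C.inFilter_other hv hvx hvy, inDeg]

end RCtx


namespace RCtx
variable (C : RCtx)

lemma outFilter_other {v : ℕ} (hv : v ∈ C.V') (hvz : v ≠ C.z) (hvq : v ≠ C.q) :
    C.V'.filter (fun w => C.arc' v w = true) =
    C.N.verts.filter (fun w => C.N.arc v w = true) := by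
  obtain ⟨hvm, hvpx, hvpy⟩ := C.mem_V'.mp hv
  ext w
  simp only [Finset.mem_filter, C.mem_V']
  constructor
  · rintro ⟨⟨hwm, -, -⟩, harc⟩
    rcases (C.hA v w).mp harc with ⟨h1, -⟩ | ⟨h2, -⟩ | ⟨h2, -⟩
    · exact ⟨hwm, h1⟩
    · exact absurd h2 hvz
    · exact absurd h2 hvq
  · rintro ⟨hwm, harc⟩
    have hwpx : w ≠ C.px := by
      rintro rfl
      rcases C.parents_px v harc with rfl | rfl
      · exact hvpy rfl
      · exact hvz rfl
    have hwpy : w ≠ C.py := by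
      rintro rfl; exact hvq (C.parent_py v harc)
    exact ⟨⟨hwm, hwpx, hwpy⟩, (C.hA v w).mpr (Or.inl ⟨harc, hvpx, hvpy, hwpx, hwpy⟩)⟩

lemma outFilter_z (hzq : C.z ≠ C.q) :
    C.V'.filter (fun w => C.arc' C.z w = true) =
    insert C.x ((C.N.verts.filter (fun w => C.N.arc C.z w = true)).erase C.px) := by
  ext w
  simp only [Finset.mem_filter, C.mem_V', Finset.mem_insert, Finset.mem_erase]
  constructor
  · rintro ⟨⟨hwm, hwpx, -⟩, harc⟩
    rcases (C.hA C.z w).mp harc with ⟨h1, -⟩ | ⟨-, h2⟩ | ⟨h2, -⟩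
    · exact Or.inr ⟨hwpx, hwm, h1⟩
    · exact Or.inl h2
    · exact absurd h2 hzq
  · rintro (rfl | ⟨hwpx, hwm, harc⟩)
    · exact ⟨⟨C.x_mem, C.x_ne_px, C.x_ne_py⟩, (C.hA _ _).mpr (Or.inr (Or.inl ⟨rfl, rfl⟩))⟩
    · have hwpy : w ≠ C.py := by
        rintro rfl; exact hzq (C.parent_py C.z harc)
      exact ⟨⟨hwm, hwpx, hwpy⟩,
        (C.hA _ _).mpr (Or.inl ⟨harc, C.z_ne_px, C.hzpy, hwpx, hwpy⟩)⟩

lemma outFilter_q (hzq : C.z ≠ C.q) :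
    C.V'.filter (fun w => C.arc' C.q w = true) =
    insert C.y ((C.N.verts.filter (fun w => C.N.arc C.q w = true)).erase C.py) := by
  ext w
  simp only [Finset.mem_filter, C.mem_V', Finset.mem_insert, Finset.mem_erase]
  constructor
  · rintro ⟨⟨hwm, -, hwpy⟩, harc⟩
    rcases (C.hA C.q w).mp harc with ⟨h1, -⟩ | ⟨h2, -⟩ | ⟨-, h2⟩
    · exact Or.inr ⟨hwpy, hwm, h1⟩
    · exact absurd h2.symm hzq
    · exact Or.inl h2
  · rintro (rfl | ⟨hwpy, hwm, harc⟩)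
    · exact ⟨⟨C.y_mem, C.y_ne_px, C.y_ne_py⟩, (C.hA _ _).mpr (Or.inr (Or.inr ⟨rfl, rfl⟩))⟩
    · have hwpx : w ≠ C.px := by
        rintro rfl
        rcases C.parents_px C.q harc with h | h
        · exact C.q_ne_py h
        · exact hzq h.symm
      exact ⟨⟨hwm, hwpx, hwpy⟩,
        (C.hA _ _).mpr (Or.inl ⟨harc, C.q_ne_px, C.q_ne_py, hwpx, hwpy⟩)⟩

lemma outFilter_zq (hzq : C.z = C.q) :
    C.V'.filter (fun w => C.arc' C.z w = true) =
    insert C.x (insert C.y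
      (((C.N.verts.filter (fun w => C.N.arc C.z w = true)).erase C.px).erase C.py)) := by
  ext w
  simp only [Finset.mem_filter, C.mem_V', Finset.mem_insert, Finset.mem_erase]
  constructor
  · rintro ⟨⟨hwm, hwpx, hwpy⟩, harc⟩
    rcases (C.hA C.z w).mp harc with ⟨h1, -⟩ | ⟨-, h2⟩ | ⟨-, h2⟩
    · exact Or.inr (Or.inr ⟨hwpy, hwpx, hwm, h1⟩)
    · exact Or.inl h2
    · exact Or.inr (Or.inl h2)
  · rintro (rfl | rfl | ⟨hwpy, hwpx, hwm, harc⟩)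
    · exact ⟨⟨C.x_mem, C.x_ne_px, C.x_ne_py⟩, (C.hA _ _).mpr (Or.inr (Or.inl ⟨rfl, rfl⟩))⟩
    · exact ⟨⟨C.y_mem, C.y_ne_px, C.y_ne_py⟩,
        (C.hA _ _).mpr (Or.inr (Or.inr ⟨hzq, rfl⟩))⟩
    · exact ⟨⟨hwm, hwpx, hwpy⟩,
        (C.hA _ _).mpr (Or.inl ⟨harc, C.z_ne_px, C.hzpy, hwpx, hwpy⟩)⟩

lemma outDeg' {v : ℕ} (hv : v ∈ C.V') :
    (C.V'.filter (fun w => C.arc' v w = true)).card = outDeg C.N v := by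
  by_cases hvz : v = C.z
  · subst hvz
    by_cases hzq : C.z = C.q
    · rw [C.outFilter_zq hzq]
      have hpxm : C.px ∈ C.N.verts.filter (fun w => C.N.arc C.z w = true) :=
        Finset.mem_filter.mpr ⟨C.px_mem, C.hzpx⟩
      have hpym : C.py ∈ (C.N.verts.filter (fun w => C.N.arc C.z w = true)).erase C.px :=
        Finset.mem_erase.mpr ⟨C.py_ne_px,
          Finset.mem_filter.mpr ⟨C.py_mem, by rw [hzq]; exact C.hqpy⟩⟩
      have hyn : C.y ∉
          ((C.N.verts.filter (fun w => C.N.arc C.z w = true)).erase C.px).erase C.py := by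
        simp only [Finset.mem_erase, Finset.mem_filter]
        rintro ⟨-, -, -, h⟩
        exact C.no_q_y (hzq ▸ h)
      have hxn : C.x ∉ insert C.y
          (((C.N.verts.filter (fun w => C.N.arc C.z w = true)).erase C.px).erase C.py) := by
        simp only [Finset.mem_insert, Finset.mem_erase, Finset.mem_filter]
        rintro (h | ⟨-, -, -, h⟩)
        · exact C.x_ne_y h
        · exact C.no_z_x h
      rw [Finset.card_insert_of_notMem hxn, Finset.card_insert_of_notMem hyn,
        Finset.card_erase_of_mem hpym, Finset.card_erase_of_mem hpxm]
      have h2 : 2 ≤ (C.N.verts.filter (fun w => C.N.arc C.z w = true)).card := by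
        have hs : ({C.px, C.py} : Finset ℕ) ⊆
            C.N.verts.filter (fun w => C.N.arc C.z w = true) := by
          intro a ha
          rcases Finset.mem_insert.mp ha with rfl | ha
          · exact hpxm
          · rw [Finset.mem_singleton] at ha; subst ha
            exact (Finset.mem_erase.mp hpym).2
        have := Finset.card_le_card hs
        rw [Finset.card_pair C.px_ne_py] at this
        exact this
      rw [outDeg]; omega
    · rw [C.outFilter_z hzq]
      have hpxm : C.px ∈ C.N.verts.filter (fun w => C.N.arc C.z w = true) :=
        Finset.mem_filter.mpr ⟨C.px_mem, C.hzpx⟩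
      have hxn : C.x ∉ (C.N.verts.filter (fun w => C.N.arc C.z w = true)).erase C.px := by
        simp only [Finset.mem_erase, Finset.mem_filter]
        rintro ⟨-, -, h⟩
        exact C.no_z_x h
      rw [Finset.card_insert_of_notMem hxn, Finset.card_erase_of_mem hpxm]
      have h1 : 1 ≤ (C.N.verts.filter (fun w => C.N.arc C.z w = true)).card :=
        Finset.card_pos.mpr ⟨C.px, hpxm⟩
      rw [outDeg]; omega
  by_cases hvq : v = C.q
  · subst hvq
    rw [C.outFilter_q (fun h => hvz h.symm)]
    have hpym : C.py ∈ C.N.verts.filter (fun w => C.N.arc C.q w = true) :=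
      Finset.mem_filter.mpr ⟨C.py_mem, C.hqpy⟩
    have hyn : C.y ∉ (C.N.verts.filter (fun w => C.N.arc C.q w = true)).erase C.py := by
      simp only [Finset.mem_erase, Finset.mem_filter]
      rintro ⟨-, -, h⟩
      exact C.no_q_y h
    rw [Finset.card_insert_of_notMem hyn, Finset.card_erase_of_mem hpym]
    have h1 : 1 ≤ (C.N.verts.filter (fun w => C.N.arc C.q w = true)).card :=
      Finset.card_pos.mpr ⟨C.py, hpym⟩
    rw [outDeg]; omega
  · rw [C.outFilter_other hv hvz hvq, outDeg]

lemma root_mem_V' : C.N.root ∈ C.V' :=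
  C.mem_V'.mpr ⟨C.N.root_mem, fun h => C.px_ne_root h.symm, fun h => C.py_ne_root h.symm⟩

lemma arc'_transGen {a b : ℕ} (h : C.arc' a b = true) :
    Relation.TransGen (fun a b : ℕ => C.N.arc a b = true) a b := by
  rcases (C.hA a b).mp h with ⟨h1, -⟩ | ⟨rfl, rfl⟩ | ⟨rfl, rfl⟩
  · exact Relation.TransGen.single h1
  · exact Relation.TransGen.trans (Relation.TransGen.single C.hzpx)
      (Relation.TransGen.single C.hpxx)
  · exact Relation.TransGen.trans (Relation.TransGen.single C.hqpy)
      (Relation.TransGen.single C.hpyy)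

def toNetwork : Network where
  verts := C.V'
  arc := C.arc'
  root := C.N.root
  root_mem := C.root_mem_V'
  arc_mem := by
    intro a b h
    rcases (C.hA a b).mp h with ⟨h1, hapx, hapy, hbpx, hbpy⟩ | ⟨rfl, rfl⟩ | ⟨rfl, rfl⟩
    · exact ⟨C.mem_V'.mpr ⟨arc_mem_left _ h1, hapx, hapy⟩,
        C.mem_V'.mpr ⟨arc_mem_right _ h1, hbpx, hbpy⟩⟩
    · exact ⟨C.mem_V'.mpr ⟨C.z_mem, C.z_ne_px, C.hzpy⟩,
        C.mem_V'.mpr ⟨C.x_mem, C.x_ne_px, C.x_ne_py⟩⟩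
    · exact ⟨C.mem_V'.mpr ⟨C.q_mem, C.q_ne_px, C.q_ne_py⟩,
        C.mem_V'.mpr ⟨C.y_mem, C.y_ne_px, C.y_ne_py⟩⟩
  acyclic := by
    intro v h
    exact C.N.acyclic v (transGen_lift (fun a b hab => C.arc'_transGen hab) v v h)
  root_indeg := by
    rw [C.inDeg' C.root_mem_V']
    exact C.N.root_indeg
  root_outdeg := by
    rw [C.outDeg' C.root_mem_V']
    exact C.N.root_outdeg
  nonroot_deg := by
    intro v hv hvr
    rw [C.inDeg' hv, C.outDeg' hv]
    exact C.N.nonroot_deg v (C.mem_V'.mp hv).1 hvr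

lemma isRet_iff {v : ℕ} (hv : v ∈ C.V') : IsRet C.toNetwork v ↔ IsRet C.N v := by
  have h := C.inDeg' hv
  constructor
  · rintro ⟨-, hd⟩
    refine ⟨(C.mem_V'.mp hv).1, ?_⟩
    rw [← h]; exact hd
  · rintro ⟨-, hd⟩
    refine ⟨hv, ?_⟩
    show (C.V'.filter (fun u => C.arc' u v = true)).card = 2
    rw [h]; exact hd

lemma isLeaf_iff {v : ℕ} (hv : v ∈ C.V') : IsLeaf C.toNetwork v ↔ IsLeaf C.N v := by
  have h1 := C.inDeg' hv
  have h2 := C.outDeg' hv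
  constructor
  · rintro ⟨-, hd, ho⟩
    refine ⟨(C.mem_V'.mp hv).1, ?_, ?_⟩
    · rw [← h1]; exact hd
    · rw [← h2]; exact ho
  · rintro ⟨-, hd, ho⟩
    refine ⟨hv, ?_, ?_⟩
    · show (C.V'.filter (fun u => C.arc' u v = true)).card = 1
      rw [h1]; exact hd
    · show (C.V'.filter (fun w => C.arc' v w = true)).card = 0
      rw [h2]; exact ho

lemma card_V' : C.V'.card + 2 = C.N.verts.card := by
  have hpe : C.py ∈ C.N.verts.erase C.px :=
    Finset.mem_erase.mpr ⟨C.py_ne_px, C.py_mem⟩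
  have h1 : 1 ≤ (C.N.verts.erase C.px).card := Finset.card_pos.mpr ⟨C.py, hpe⟩
  have h2 : 1 ≤ C.N.verts.card := Finset.card_pos.mpr ⟨C.px, C.px_mem⟩
  rw [V', Finset.card_erase_of_mem hpe, Finset.card_erase_of_mem C.px_mem]
  rw [Finset.card_erase_of_mem C.px_mem] at h1
  omega

lemma step : CherryStep C.N C.toNetwork :=
  ⟨C.x, C.y, Or.inr ⟨C.px, C.py, C.z, C.q, C.hx, C.hy, C.hret, C.hpxx, C.hpypx,
    C.hpyy, C.hzpx, C.hzpy, C.hqpy, rfl, rfl, C.hA⟩⟩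

end RCtx


namespace RCtx
variable (C : RCtx)

lemma label_reduce {t : ℕ → ℝ} (ht : IsNonTemporal C.N t)
    (hall : ∀ r, IsRet C.N r → ∃ u, C.N.arc u r = true ∧ t u = t r) :
    IsNonTemporal C.toNetwork t ∧
    ∀ r, IsRet C.toNetwork r → ∃ u, C.toNetwork.arc u r = true ∧ t u = t r := by
  obtain ⟨ha1, ha2, ha3, ha4⟩ := ht
  have hpxx' : t C.px < t C.x := by
    have a1 : t C.px ≤ t C.x := ha1 _ _ C.hpxx
    exact lt_of_le_of_ne a1 (fun he => leaf_not_ret _ C.hx (ha2 _ _ C.hpxx he))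
  have hpyy' : t C.py < t C.y := by
    have a1 : t C.py ≤ t C.y := ha1 _ _ C.hpyy
    exact lt_of_le_of_ne a1 (fun he => leaf_not_ret _ C.hy (ha2 _ _ C.hpyy he))
  have hzx : t C.z < t C.x := lt_of_le_of_lt (ha1 _ _ C.hzpx) hpxx'
  have hqy : t C.q < t C.y := lt_of_le_of_lt (ha1 _ _ C.hqpy) hpyy'
  refine ⟨⟨?_, ?_, ?_, ?_⟩, ?_⟩
  · intro u v h
    rcases (C.hA u v).mp h with ⟨h1, -⟩ | ⟨rfl, rfl⟩ | ⟨rfl, rfl⟩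
    · exact ha1 _ _ h1
    · exact hzx.le
    · exact hqy.le
  · intro u v h he
    rcases (C.hA u v).mp h with ⟨h1, -⟩ | ⟨rfl, rfl⟩ | ⟨rfl, rfl⟩
    · have hv : v ∈ C.V' := (C.toNetwork.arc_mem u v h).2
      exact (C.isRet_iff hv).mpr (ha2 _ _ h1 he)
    · exact absurd he hzx.ne
    · exact absurd he hqy.ne
  · intro u hu
    have huV : u ∈ C.V' := hu.1
    obtain ⟨hum, hupx, hupy⟩ := C.mem_V'.mp huV
    have huN : IsInternal C.N u :=
      ⟨hum, hu.2.1, fun hl => hu.2.2 ((C.isLeaf_iff huV).mpr hl)⟩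
    obtain ⟨c, hc, hlt⟩ := ha3 u huN
    by_cases hcpx : c = C.px
    · subst hcpx
      rcases C.parents_px u hc with rfl | rfl
      · exact absurd rfl hupy
      · exact ⟨C.x, (C.hA _ _).mpr (Or.inr (Or.inl ⟨rfl, rfl⟩)), lt_trans hlt hpxx'⟩
    by_cases hcpy : c = C.py
    · subst hcpy
      have : u = C.q := C.parent_py u hc
      subst this
      exact ⟨C.y, (C.hA _ _).mpr (Or.inr (Or.inr ⟨rfl, rfl⟩)), lt_trans hlt hpyy'⟩
    · exact ⟨c, (C.hA _ _).mpr (Or.inl ⟨hc, hupx, hupy, hcpx, hcpy⟩), hlt⟩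
  · intro r u v hr hu hv huv hboth
    have hrV : r ∈ C.V' := hr.1
    have hrN : IsRet C.N r := (C.isRet_iff hrV).mp hr
    have hmap : ∀ w, C.toNetwork.arc w r = true → C.N.arc w r = true := by
      intro w hw
      rcases (C.hA w r).mp hw with ⟨h1, -⟩ | ⟨-, rfl⟩ | ⟨-, rfl⟩
      · exact h1
      · exact absurd hrN C.x_not_ret
      · exact absurd hrN C.y_not_ret
    exact ha4 r u v hrN (hmap u hu) (hmap v hv) huv hboth
  · intro r hr
    have hrV : r ∈ C.V' := hr.1
    obtain ⟨hrm, hrpx, hrpy⟩ := C.mem_V'.mp hrV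
    have hrN : IsRet C.N r := (C.isRet_iff hrV).mp hr
    obtain ⟨u, hu, he⟩ := hall r hrN
    have hupx : u ≠ C.px := by
      rintro rfl
      exact C.x_not_ret ((C.child_px r hu) ▸ hrN)
    have hupy : u ≠ C.py := by
      rintro rfl
      rcases C.child_py r hu with rfl | rfl
      · exact hrpx rfl
      · exact C.y_not_ret hrN
    exact ⟨u, (C.hA _ _).mpr (Or.inl ⟨hu, hupx, hupy, hrpx, hrpy⟩), he⟩

lemma arcN_cases {a b : ℕ} (h : C.N.arc a b = true) :
    (a = C.py ∧ b = C.px) ∨ (a = C.z ∧ b = C.px) ∨ (a = C.q ∧ b = C.py) ∨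
    (a = C.px ∧ b = C.x) ∨ (a = C.py ∧ b = C.y) ∨
    (C.arc' a b = true ∧ a ≠ C.px ∧ a ≠ C.py ∧ a ≠ C.x ∧ a ≠ C.y ∧
      b ≠ C.px ∧ b ≠ C.py ∧ b ≠ C.x ∧ b ≠ C.y) := by
  by_cases hbpx : b = C.px
  · subst hbpx
    rcases C.parents_px a h with rfl | rfl
    · exact Or.inl ⟨rfl, rfl⟩
    · exact Or.inr (Or.inl ⟨rfl, rfl⟩)
  by_cases hbpy : b = C.py
  · subst hbpy
    exact Or.inr (Or.inr (Or.inl ⟨C.parent_py a h, rfl⟩))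
  by_cases hbx : b = C.x
  · subst hbx
    exact Or.inr (Or.inr (Or.inr (Or.inl ⟨C.parent_x a h, rfl⟩)))
  by_cases hby : b = C.y
  · subst hby
    exact Or.inr (Or.inr (Or.inr (Or.inr (Or.inl ⟨C.parent_y a h, rfl⟩))))
  have hapx : a ≠ C.px := by
    rintro rfl; exact hbx (C.child_px b h)
  have hapy : a ≠ C.py := by
    rintro rfl
    rcases C.child_py b h with rfl | rfl
    · exact hbpx rfl
    · exact hby rfl
  have hax : a ≠ C.x := by rintro rfl; exact leaf_no_child _ C.hx h
  have hay : a ≠ C.y := by rintro rfl; exact leaf_no_child _ C.hy h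
  exact Or.inr (Or.inr (Or.inr (Or.inr (Or.inr
    ⟨(C.hA a b).mpr (Or.inl ⟨h, hapx, hapy, hbpx, hbpy⟩),
      hapx, hapy, hax, hay, hbpx, hbpy, hbx, hby⟩))))

lemma label_pullback {t' : ℕ → ℝ} (ht : IsNonTemporal C.toNetwork t')
    (hall : ∀ r, IsRet C.toNetwork r → ∃ u, C.toNetwork.arc u r = true ∧ t' u = t' r) :
    ∃ t, IsNonTemporal C.N t ∧
      ∀ r, IsRet C.N r → ∃ u, C.N.arc u r = true ∧ t u = t r := by
  classical
  obtain ⟨ha1, ha2, ha3, ha4⟩ := ht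
  set B : ℝ := max (t' C.z) (t' C.q) with hBdef
  refine ⟨fun v => if v = C.x ∨ v = C.y then B + 2
      else if v = C.px ∨ v = C.py then B + 1 else t' v, ?_⟩
  set t : ℕ → ℝ := fun v => if v = C.x ∨ v = C.y then B + 2
      else if v = C.px ∨ v = C.py then B + 1 else t' v with htdef
  have tx : t C.x = B + 2 := by simp [htdef]
  have ty : t C.y = B + 2 := by simp [htdef]
  have tpx : t C.px = B + 1 := by
    have h1 : ¬(C.px = C.x ∨ C.px = C.y) := by
      push_neg
      exact ⟨fun h => C.x_ne_px h.symm, fun h => C.y_ne_px h.symm⟩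
    simp [htdef, h1]
  have tpy : t C.py = B + 1 := by
    have h1 : ¬(C.py = C.x ∨ C.py = C.y) := by
      push_neg
      exact ⟨fun h => C.x_ne_py h.symm, fun h => C.y_ne_py h.symm⟩
    simp [htdef, h1]
  have tother : ∀ v, v ≠ C.px → v ≠ C.py → v ≠ C.x → v ≠ C.y → t v = t' v := by
    intro v h1 h2 h3 h4
    have hn : ¬(v = C.x ∨ v = C.y) := by push_neg; exact ⟨h3, h4⟩
    have hn2 : ¬(v = C.px ∨ v = C.py) := by push_neg; exact ⟨h1, h2⟩
    simp [htdef, hn, hn2]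
  have tz : t C.z = t' C.z := tother _ C.z_ne_px C.hzpy C.z_ne_x C.z_ne_y
  have tq : t C.q = t' C.q := tother _ C.q_ne_px C.q_ne_py C.q_ne_x C.q_ne_y
  have hzB : t' C.z ≤ B := le_max_left _ _
  have hqB : t' C.q ≤ B := le_max_right _ _
  have hretN : ∀ r, IsRet C.N r → r ≠ C.px → r ≠ C.py ∧ r ≠ C.x ∧ r ≠ C.y ∧
      r ∈ C.V' ∧ IsRet C.toNetwork r ∧ t r = t' r := by
    intro r hr hrpx
    have hrpy : r ≠ C.py := fun he => C.py_not_ret (he ▸ hr)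
    have hrx : r ≠ C.x := fun he => C.x_not_ret (he ▸ hr)
    have hry : r ≠ C.y := fun he => C.y_not_ret (he ▸ hr)
    have hrV : r ∈ C.V' := C.mem_V'.mpr ⟨hr.1, hrpx, hrpy⟩
    exact ⟨hrpy, hrx, hry, hrV, (C.isRet_iff hrV).mpr hr, tother r hrpx hrpy hrx hry⟩
  refine ⟨⟨?_, ?_, ?_, ?_⟩, ?_⟩
  · intro u v h
    rcases C.arcN_cases h with ⟨rfl, rfl⟩ | ⟨rfl, rfl⟩ | ⟨rfl, rfl⟩ | ⟨rfl, rfl⟩ |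
      ⟨rfl, rfl⟩ | ⟨h1, hupx, hupy, hux, huy, hvpx, hvpy, hvx, hvy⟩
    · rw [tpy, tpx]
    · rw [tz, tpx]; linarith
    · rw [tq, tpy]; linarith
    · rw [tpx, tx]; linarith
    · rw [tpy, ty]; linarith
    · rw [tother u hupx hupy hux huy, tother v hvpx hvpy hvx hvy]
      exact ha1 _ _ h1
  · intro u v h he
    rcases C.arcN_cases h with ⟨rfl, rfl⟩ | ⟨rfl, rfl⟩ | ⟨rfl, rfl⟩ | ⟨rfl, rfl⟩ |
      ⟨rfl, rfl⟩ | ⟨h1, hupx, hupy, hux, huy, hvpx, hvpy, hvx, hvy⟩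
    · exact C.hret
    · rw [tz, tpx] at he; linarith
    · rw [tq, tpy] at he; linarith
    · rw [tpx, tx] at he; linarith
    · rw [tpy, ty] at he; linarith
    · rw [tother u hupx hupy hux huy, tother v hvpx hvpy hvx hvy] at he
      have hvV : v ∈ C.V' := C.mem_V'.mpr ⟨arc_mem_right _ h, hvpx, hvpy⟩
      exact (C.isRet_iff hvV).mp (ha2 _ _ h1 he)
  · intro u hu
    by_cases hupx : u = C.px
    · subst hupx
      refine ⟨C.x, C.hpxx, ?_⟩
      rw [tpx, tx]; linarith
    by_cases hupy : u = C.py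
    · subst hupy
      refine ⟨C.y, C.hpyy, ?_⟩
      rw [tpy, ty]; linarith
    · have hux : u ≠ C.x := fun he => hu.2.2 (he ▸ C.hx)
      have huy : u ≠ C.y := fun he => hu.2.2 (he ▸ C.hy)
      have huV : u ∈ C.V' := C.mem_V'.mpr ⟨hu.1, hupx, hupy⟩
      have hu' : IsInternal C.toNetwork u :=
        ⟨huV, hu.2.1, fun hl => hu.2.2 ((C.isLeaf_iff huV).mp hl)⟩
      obtain ⟨c, hc, hlt⟩ := ha3 u hu'
      rcases (C.hA u c).mp hc with ⟨h1, -, -, hcpx, hcpy⟩ | ⟨rfl, rfl⟩ | ⟨rfl, rfl⟩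
      · have hcx : c ≠ C.x := by
          rintro rfl; exact hupx (C.parent_x u h1)
        have hcy : c ≠ C.y := by
          rintro rfl; exact hupy (C.parent_y u h1)
        refine ⟨c, h1, ?_⟩
        rw [tother u hupx hupy hux huy, tother c hcpx hcpy hcx hcy]
        exact hlt
      · refine ⟨C.px, C.hzpx, ?_⟩
        rw [tz, tpx]; linarith
      · refine ⟨C.py, C.hqpy, ?_⟩
        rw [tq, tpy]; linarith
  · intro r u v hr hu hv huv hboth
    by_cases hrpx : r = C.px
    · subst hrpx
      rcases C.parents_px u hu with rfl | rfl <;>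
        rcases C.parents_px v hv with rfl | rfl
      · exact huv rfl
      · have := hboth.2; rw [tz, tpx] at this; linarith
      · have := hboth.1; rw [tz, tpx] at this; linarith
      · exact huv rfl
    · obtain ⟨hrpy, hrx, hry, hrV, hr', hrt⟩ := hretN r hr hrpx
      have hmap : ∀ w, C.N.arc w r = true →
          C.toNetwork.arc w r = true ∧ t w = t' w := by
        intro w hw
        rcases C.arcN_cases hw with ⟨-, h2⟩ | ⟨-, h2⟩ | ⟨-, h2⟩ | ⟨-, h2⟩ |
          ⟨-, h2⟩ | ⟨h1, hwpx, hwpy, hwx, hwy, -⟩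
        · exact absurd h2 hrpx
        · exact absurd h2 hrpx
        · exact absurd h2 hrpy
        · exact absurd h2 hrx
        · exact absurd h2 hry
        · exact ⟨h1, tother w hwpx hwpy hwx hwy⟩
      obtain ⟨hu', hut⟩ := hmap u hu
      obtain ⟨hv', hvt⟩ := hmap v hv
      refine ha4 r u v hr' hu' hv' huv ?_
      rw [← hut, ← hvt, ← hrt]
      exact hboth
  · intro r hr
    by_cases hrpx : r = C.px
    · subst hrpx
      refine ⟨C.py, C.hpypx, ?_⟩
      rw [tpy, tpx]
    · obtain ⟨hrpy, hrx, hry, hrV, hr', hrt⟩ := hretN r hr hrpx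
      obtain ⟨u, hu, he⟩ := hall r hr'
      rcases (C.hA u r).mp hu with ⟨h1, hupx, hupy, -⟩ | ⟨-, rfl⟩ | ⟨-, rfl⟩
      · have hux : u ≠ C.x := by rintro rfl; exact leaf_no_child _ C.hx h1
        have huy : u ≠ C.y := by rintro rfl; exact leaf_no_child _ C.hy h1
        refine ⟨u, h1, ?_⟩
        rw [tother u hupx hupy hux huy, hrt]
        exact he
      · exact absurd rfl hrx
      · exact absurd rfl hry

end RCtx


lemma Network.ext' {N₁ N₂ : Network} (hV : N₁.verts = N₂.verts)
    (hA : N₁.arc = N₂.arc) (hR : N₁.root = N₂.root) : N₁ = N₂ := by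
  cases N₁; cases N₂
  simp only at hV hA hR
  subst hV; subst hA; subst hR
  rfl

lemma isSingleLeaf_of_no_internal (N : Network) (h : ∀ v, ¬ IsInternal N v) :
    IsSingleLeaf N := by
  obtain ⟨c, hc, hcu⟩ := root_child N
  refine ⟨c, ne_root_of_arc N hc, ?_⟩
  apply Finset.Subset.antisymm
  · intro v hv
    by_cases hvr : v = N.root
    · simp [hvr]
    obtain ⟨u, hu⟩ := exists_parent N hv hvr
    by_cases hur : u = N.root
    · have : v = c := hcu v (hur ▸ hu)
      simp [this]
    rcases classify N (arc_mem_left N hu) hur with hul | huint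
    · exact absurd (leaf_no_child N hul hu) not_false
    · exact absurd huint (h u)
  · intro v hv
    rcases Finset.mem_insert.mp hv with rfl | hv
    · exact N.root_mem
    · rw [Finset.mem_singleton] at hv; subst hv
      exact arc_mem_right N hc

lemma no_ret_of_single_leaf (N : Network) (h : IsSingleLeaf N) :
    ∀ r, ¬ IsRet N r := by
  obtain ⟨c, hcr, hV⟩ := h
  intro r hr
  have hrm := hr.1
  rw [hV] at hrm
  rcases Finset.mem_insert.mp hrm with rfl | hrm
  · exact ret_ne_root N hr rfl
  · rw [Finset.mem_singleton] at hrm; subst hrm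
    have hsub : N.verts.filter (fun u => N.arc u r = true) ⊆ {N.root} := by
      intro a ha
      obtain ⟨ham, haarc⟩ := Finset.mem_filter.mp ha
      rw [hV] at ham
      rcases Finset.mem_insert.mp ham with rfl | ham
      · simp
      · rw [Finset.mem_singleton] at ham; subst ham
        exact absurd haarc (not_self_arc N a)
    have := Finset.card_le_card hsub
    rw [Finset.card_singleton] at this
    have h2 := hr.2
    rw [inDeg] at h2
    omega

open scoped Classical in
lemma exists_ctx (N : Network) (t : ℕ → ℝ) (ht : IsNonTemporal N t)
    (hall : ∀ r, IsRet N r → ∃ u, N.arc u r = true ∧ t u = t r)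
    (v0 : ℕ) (hv0 : IsInternal N v0) :
    (∃ C : CCtx, C.N = N) ∨ (∃ C : RCtx, C.N = N) := by
  classical
  set I : Finset ℕ := N.verts.filter (fun v => IsInternal N v) with hIdef
  have hI0 : v0 ∈ I := Finset.mem_filter.mpr ⟨hv0.1, hv0⟩
  obtain ⟨m, hmI, hmax⟩ := I.exists_max_image t ⟨v0, hI0⟩
  have hmaxI : ∀ v, IsInternal N v → t v ≤ t m :=
    fun v hv => hmax v (Finset.mem_filter.mpr ⟨hv.1, hv⟩)
  have claimA : ∀ u, IsInternal N u → t u = t m → ¬ IsRet N u →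
      (∃ C : CCtx, C.N = N) ∨ (∃ C : RCtx, C.N = N) := by
    intro u hu he hnr
    obtain ⟨h1, h2⟩ := tree_degs N hu.1 hu.2.1 hu.2.2 hnr
    obtain ⟨c0, hc0, hlt⟩ := ht.2.2.1 u hu
    have hc0leaf : IsLeaf N c0 := by
      rcases classify N (arc_mem_right N hc0) (ne_root_of_arc N hc0) with hl | hin
      · exact hl
      · have h3 := hmaxI c0 hin
        exfalso; linarith [he ▸ h3]
    obtain ⟨c1, hc1, hc1ne⟩ := exists_other_child N h2 hc0
    obtain ⟨q, hq⟩ := exists_parent N hu.1 hu.2.1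
    rcases classify N (arc_mem_right N hc1) (ne_root_of_arc N hc1) with hleaf | hint
    · left
      refine ⟨⟨N, c1, c0, u, q, fun a b => decide
        ((N.arc a b = true ∧ a ≠ u ∧ b ≠ u ∧ b ≠ c1) ∨ (a = q ∧ b = c0)),
        hleaf, hc0leaf, hc1ne, hc1, hc0, hq, ?_⟩, rfl⟩
      intro a b
      simp only [decide_eq_true_eq]
    · have he1 : t c1 = t u := by
        have h3 := hmaxI c1 hint
        have h4 := ht.1 u c1 hc1
        linarith [he ▸ h3]
      have hret1 : IsRet N c1 := ht.2.1 u c1 hc1 he1.symm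
      obtain ⟨d, hd, hdlt⟩ := ht.2.2.1 c1 hint
      have hdleaf : IsLeaf N d := by
        rcases classify N (arc_mem_right N hd) (ne_root_of_arc N hd) with hl | hin
        · exact hl
        · have h3 := hmaxI d hin
          exfalso
          have h4 : t d ≤ t u := he ▸ h3
          linarith [he1]
      obtain ⟨z, hz, hzu⟩ := exists_other_parent N hret1.2 hc1
      right
      refine ⟨⟨N, d, c0, c1, u, z, q, fun a b => decide
        ((N.arc a b = true ∧ a ≠ c1 ∧ a ≠ u ∧ b ≠ c1 ∧ b ≠ u) ∨
          (a = z ∧ b = d) ∨ (a = q ∧ b = c0)),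
        hdleaf, hc0leaf, hret1, hd, hc1, hc0, hz, hzu, hq, ?_⟩, rfl⟩
      intro a b
      simp only [decide_eq_true_eq]
  have claimB : ∀ n p, rank N p ≤ n → IsInternal N p → t p = t m →
      (∃ C : CCtx, C.N = N) ∨ (∃ C : RCtx, C.N = N) := by
    intro n
    induction n with
    | zero =>
      intro p hrk hp he
      by_cases hnr : IsRet N p
      · obtain ⟨u, hu, huh⟩ := hall p hnr
        have := rank_lt N hu; omega
      · exact claimA p hp he hnr
    | succ n ih =>
      intro p hrk hp he
      by_cases hnr : IsRet N p
      · obtain ⟨u, hu, huh⟩ := hall p hnr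
        have hune : ¬ IsLeaf N u := fun hl => leaf_no_child N hl hu
        rcases eq_or_ne u N.root with hroot | hne
        · obtain ⟨z, hz, hzu⟩ := exists_other_parent N hnr.2 hu
          have hz1 : t N.root ≤ t z := label_mono N ht.1 (reachable N (arc_mem_left N hz))
          have hz2 : t z ≤ t p := ht.1 _ _ hz
          have hz3 : t z = t p := by
            have : t N.root = t p := by rw [← hroot]; exact huh
            linarith
          exact absurd ⟨huh, hz3⟩
            (ht.2.2.2 p u z hnr hu hz (fun h2 => hzu h2.symm))
        · have huI : IsInternal N u := ⟨arc_mem_left N hu, hne, hune⟩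
          have hue : t u = t m := by rw [huh, he]
          exact ih u (by have := rank_lt N hu; omega) huI hue
      · exact claimA p hp he hnr
  exact claimB (rank N m) m le_rfl (Finset.mem_filter.mp hmI).2 rfl

lemma orchard_of_label : ∀ n : ℕ, ∀ N : Network, N.verts.card ≤ n →
    ∀ t : ℕ → ℝ, IsNonTemporal N t →
    (∀ r, IsRet N r → ∃ u, N.arc u r = true ∧ t u = t r) → IsOrchard N := by
  intro n
  induction n with
  | zero =>
    intro N hc
    have := Finset.card_pos.mpr ⟨N.root, N.root_mem⟩
    omega
  | succ n ih =>
    intro N hc t ht hall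
    by_cases hint : ∀ v, ¬ IsInternal N v
    · exact ⟨N, Relation.ReflTransGen.refl, isSingleLeaf_of_no_internal N hint⟩
    · push_neg at hint
      obtain ⟨v0, hv0⟩ := hint
      rcases exists_ctx N t ht hall v0 hv0 with ⟨C, rfl⟩ | ⟨C, rfl⟩
      · obtain ⟨ht', hall'⟩ := C.label_reduce ht hall
        have h2 : C.toNetwork.verts.card + 2 = C.N.verts.card := C.card_V'
        obtain ⟨M, hM1, hM2⟩ := ih C.toNetwork (by omega) t ht' hall'
        exact ⟨M, Relation.ReflTransGen.head C.step hM1, hM2⟩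
      · obtain ⟨ht', hall'⟩ := C.label_reduce ht hall
        have h2 : C.toNetwork.verts.card + 2 = C.N.verts.card := C.card_V'
        obtain ⟨M, hM1, hM2⟩ := ih C.toNetwork (by omega) t ht' hall'
        exact ⟨M, Relation.ReflTransGen.head C.step hM1, hM2⟩

lemma label_of_orchard (N : Network) (h : IsOrchard N) :
    ∃ t : ℕ → ℝ, IsNonTemporal N t ∧
      ∀ r, IsRet N r → ∃ u, N.arc u r = true ∧ t u = t r := by
  obtain ⟨Nf, hsteps, hNf⟩ := h
  induction hsteps using Relation.ReflTransGen.head_induction_on with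
  | refl =>
    obtain ⟨t, ht⟩ := exists_nontemporal Nf
    exact ⟨t, ht, fun r hr => absurd hr (no_ret_of_single_leaf _ hNf r)⟩
  | head hstep hrest ih =>
    rename_i a c
    obtain ⟨t', ht', hall'⟩ := ih
    obtain ⟨x, y, hcase⟩ := hstep
    rcases hcase with ⟨p, q, hx, hy, hxy, hpx, hpy, hqp, hV, hR, hA⟩ |
      ⟨px, py, z, q, hx, hy, hret, hpxx, hpypx, hpyy, hzpx, hzpy, hqpy, hV, hR, hA⟩
    · set C : CCtx := ⟨a, x, y, p, q, c.arc, hx, hy, hxy, hpx, hpy, hqp, hA⟩ with hCdef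
      have hEq : c = C.toNetwork := Network.ext' hV rfl hR
      rw [hEq] at ht' hall'
      exact C.label_pullback ht' hall'
    · set C : RCtx := ⟨a, x, y, px, py, z, q, c.arc, hx, hy, hret, hpxx, hpypx,
        hpyy, hzpx, hzpy, hqpy, hA⟩ with hCdef
      have hEq : c = C.toNetwork := Network.ext' hV rfl hR
      rw [hEq] at ht' hall'
      exact C.label_pullback ht' hall'

/-- A network is orchard if and only if `V_OR(N) = 0`. -/
theorem orchard_iff_VOR_eq_zero (N : Network) : IsOrchard N ↔ VOR N = 0 := by
  constructor
  · intro h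
    obtain ⟨t, ht, hall⟩ := label_of_orchard N h
    refine (VOR_eq_zero_iff N).mpr ⟨t, ht, ?_⟩
    rw [inretCount_eq_zero_iff]
    rintro r ⟨hr, hno⟩
    obtain ⟨u, hu, he⟩ := hall r hr
    exact hno u hu he
  · intro h
    obtain ⟨t, ht, h0⟩ := (VOR_eq_zero_iff N).mp h
    have hall : ∀ r, IsRet N r → ∃ u, N.arc u r = true ∧ t u = t r := by
      intro r hr
      have hni := (inretCount_eq_zero_iff N t).mp h0 r
      rw [Inret] at hni
      push_neg at hni
      obtain ⟨u, hu, he⟩ := hni hr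
      exact ⟨u, hu, he⟩
    exact orchard_of_label N.verts.card N le_rfl t ht hall

end PhyloNet
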